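/- arXiv:1205.4354 — 4 statements merged into one kernel-verified Lean document; each statement's English description precedes it below -/
import Mathlib

section
/- Let A be a Banach algebra and let J ⊆ A be a left ideal of A that is dense in A for the norm topology. Then J (as an algebra) is directly finite if and only if A is directly finite. -/
/-- Powers `c^(n+1)` in a non-unital setting. -/
private def dfPow {A : Type*} [Mul A] (c : A) : ℕ → A
  | 0 => c
  | n + 1 => c * dfPow c n

private lemma dfPow_comm {A : Type*} [Semigroup A] (c : A) (n : ℕ) :
    dfPow c n * c = c * dfPow c n := by
  induction n with
  | zero => rfl
  | succ n ih => show (c * dfPow c n) * c = _; rw [mul_assoc, ih]; rfl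

private lemma dfPow_norm {A : Type*} [NonUnitalSeminormedRing A] (c : A) (n : ℕ) :
    ‖dfPow c n‖ ≤ ‖c‖ ^ (n + 1) := by
  induction n with
  | zero => simp [dfPow]
  | succ n ih =>
    calc ‖dfPow c (n + 1)‖ = ‖c * dfPow c n‖ := rfl
      _ ≤ ‖c‖ * ‖dfPow c n‖ := norm_mul_le _ _
      _ ≤ ‖c‖ * ‖c‖ ^ (n + 1) := mul_le_mul_of_nonneg_left ih (norm_nonneg c)
      _ = ‖c‖ ^ (n + 1 + 1) := by ring

/-- The circle (quasi-product) operation. -/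
private def circ {R : Type*} [NonUnitalRing R] (x y : R) : R := x + y - x * y

private lemma circ_assoc {R : Type*} [NonUnitalRing R] (x y z : R) :
    circ (circ x y) z = circ x (circ y z) := by
  unfold circ; noncomm_ring

private lemma circ_zero {R : Type*} [NonUnitalRing R] (x : R) : circ x 0 = x := by
  simp [circ]

private lemma zero_circ {R : Type*} [NonUnitalRing R] (x : R) : circ 0 x = x := by
  simp [circ]

/-- Let `A` be a (complex) Banach algebra and `J ⊆ A` a dense left
ideal. Then `J` is directly finite (for the quasi-product `a ∘ b = a + b - a * b`)
if and only if `A` is. -/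
theorem directlyFinite_of_dense_left_ideal
    {A : Type*} [NonUnitalNormedRing A] [NormedSpace ℂ A]
    [IsScalarTower ℂ A A] [SMulCommClass ℂ A A] [CompleteSpace A]
    (J : Submodule ℂ A)
    (hideal : ∀ a : A, ∀ j ∈ J, a * j ∈ J)
    (hmul : ∀ i ∈ J, ∀ j ∈ J, i * j ∈ J)
    (hdense : Dense (J : Set A)) :
    (∀ a ∈ J, ∀ b ∈ J, a + b - a * b = 0 → b + a - b * a = 0) ↔
      (∀ a b : A, a + b - a * b = 0 → b + a - b * a = 0) := by
  constructor
  · intro hJ a b hab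
    -- choose j ∈ J close to b
    obtain ⟨j, hjJ, hj⟩ : ∃ j ∈ J, ‖b - j‖ < 1 := by
      obtain ⟨j, hjJ, hd⟩ := Metric.mem_closure_iff.mp (hdense b) 1 one_pos
      exact ⟨j, hjJ, by rwa [dist_eq_norm] at hd⟩
    set c : A := b - j with hc_def
    -- build the quasi-inverse d of c
    have hsummable : Summable (dfPow c) := by
      apply Summable.of_norm_bounded ?_ (dfPow_norm c)
      have hg : Summable (fun n : ℕ => ‖c‖ ^ n) :=
        summable_geometric_of_lt_one (norm_nonneg c) hj
      have := hg.mul_left ‖c‖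
      refine this.congr fun n => ?_
      rw [pow_succ']
    set d : A := ∑' n, dfPow c n with hd_def
    have h1 : HasSum (dfPow c) d := hsummable.hasSum
    have h2 : HasSum (fun n => c * dfPow c n) (c * d) := h1.mul_left c
    have h3 : HasSum (fun n => dfPow c (n + 1)) (c * d) := h2
    have h4 : d = c + c * d := by
      rw [← h3.tsum_eq]
      exact Summable.tsum_eq_zero_add hsummable
    have h5 : c * d + c = d := by rw [add_comm]; exact h4.symm
    have hcd : c * d = d - c := eq_sub_of_add_eq h5
    have hdc : d * c = d - c := by
      have h6 : HasSum (fun n => dfPow c n * c) (d * c) := h1.mul_right c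
      have h7 : HasSum (fun n => c * dfPow c n) (d * c) := by
        refine h6.congr_fun fun n => ?_
        exact (dfPow_comm c n).symm
      have : d * c = c * d := h7.unique h2
      rw [this, hcd]
    -- the circle-algebra
    have hX : circ c (-d) = 0 := by
      show c + -d - c * -d = 0
      rw [mul_neg, hcd]; abel
    have hY : circ (-d) c = 0 := by
      show -d + c - -d * c = 0
      rw [neg_mul, hdc]; abel
    set s : A := circ a c with hs_def
    set t : A := circ (-d) b with ht_def
    have hct : circ c t = b := by
      rw [ht_def, ← circ_assoc, hX, zero_circ]
    have hst : circ s t = 0 := by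
      rw [hs_def, circ_assoc, hct]
      exact hab
    have htJ : t ∈ J := by
      have hb : c + j = b := sub_add_cancel b j
      have ht2 : t = j + d * j := by
        show -d + b - -d * b = j + d * j
        rw [← hb, neg_mul, mul_add, hdc]
        abel
      rw [ht2]
      exact J.add_mem hjJ (hideal d j hjJ)
    have hsJ : s ∈ J := by
      have hs2 : s = s * t - t := by
        have h : s + t - s * t = 0 := hst
        calc s = (s + t - s * t) + (s * t - t) := by abel
          _ = 0 + (s * t - t) := by rw [h]
          _ = s * t - t := by rw [zero_add]
      rw [hs2]
      exact J.sub_mem (hideal s t htJ) htJ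
    have hts : circ t s = 0 := hJ s hsJ t htJ hst
    -- unwind: circ t s = circ (-d) (circ (circ b a) c)
    have hw : circ (-d) (circ (circ b a) c) = 0 := by
      rw [circ_assoc, ← circ_assoc (-d) b (circ a c)]
      exact hts
    have hwc : circ (circ b a) c = c := by
      calc circ (circ b a) c = circ 0 (circ (circ b a) c) := (zero_circ _).symm
        _ = circ (circ c (-d)) (circ (circ b a) c) := by rw [hX]
        _ = circ c (circ (-d) (circ (circ b a) c)) := circ_assoc _ _ _
        _ = circ c 0 := by rw [hw]
        _ = c := circ_zero c
    have : circ b a = 0 := by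
      calc circ b a = circ (circ b a) 0 := (circ_zero _).symm
        _ = circ (circ b a) (circ c (-d)) := by rw [hX]
        _ = circ (circ (circ b a) c) (-d) := (circ_assoc _ _ _).symm
        _ = circ c (-d) := by rw [hwc]
        _ = 0 := hX
    exact this
  · intro hA a _ b _ hab
    exact hA a b hab
end

section
/- Let A be a C*-algebra and let τ : A₊ → [0, ∞] be a faithful tracial weight: τ is additive and ℝ₊-homogeneous on the positive cone A₊, τ(x) > 0 for every nonzero x ∈ A₊, and τ(x*x) = τ(xx*) for all x ∈ A. Let B be the norm closure in A of the linear span of {x ∈ A₊ : τ(x) < ∞}. Then B is directly finite: whenever a, b ∈ B satisfy a + b − ab = 0, it follows that b + a − ba = 0. -/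
open scoped ENNReal
set_option linter.unusedSectionVars false
set_option linter.unusedVariables false
set_option linter.unreachableTactic false
set_option linter.unusedTactic false
set_option maxHeartbeats 1600000

namespace DF8


variable {A : Type*} [NonUnitalNormedRing A] [StarRing A] [CStarRing A]
    [NormedSpace ℂ A] [IsScalarTower ℂ A A] [SMulCommClass ℂ A A] [StarModule ℂ A]
    [CompleteSpace A] [PartialOrder A] [StarOrderedRing A]

noncomputable instance : NonUnitalCStarAlgebra A := {}

lemma real_smul_eq (r : ℝ) (x : A) : ((r:ℂ)) • x = r • x := by
  rw [← algebraMap_smul (R := ℝ) ℂ r x]; norm_num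

lemma smul_nonneg'' (r : ℝ) (hr : 0 ≤ r) {x : A} (hx : 0 ≤ x) : 0 ≤ r • x := by
  rw [StarOrderedRing.nonneg_iff] at hx ⊢
  induction hx using AddSubmonoid.closure_induction with
  | mem z hz =>
    obtain ⟨s, rfl⟩ := hz
    apply AddSubmonoid.subset_closure
    refine ⟨(Real.sqrt r : ℂ) • s, ?_⟩
    show star ((Real.sqrt r : ℂ) • s) * ((Real.sqrt r : ℂ) • s) = r • (star s * s)
    rw [star_smul, smul_mul_smul_comm, ← real_smul_eq]
    congr 1
    rw [Complex.star_def, Complex.conj_ofReal, ← Complex.ofReal_mul, Real.mul_self_sqrt hr]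
  | zero => simpa using AddSubmonoid.zero_mem _
  | add x y _ _ hx hy => rw [smul_add]; exact AddSubmonoid.add_mem _ hx hy

section tau
variable (τ : A → ℝ≥0∞)

lemma tau_zero (hhomog : ∀ (t : ℝ) (x : A), 0 ≤ t → 0 ≤ x → τ (t • x) = ENNReal.ofReal t * τ x) :
    τ 0 = 0 := by
  have := hhomog 0 0 le_rfl le_rfl
  simpa using this

lemma tau_mono (hadd : ∀ x y : A, 0 ≤ x → 0 ≤ y → τ (x + y) = τ x + τ y)
    {x y : A} (hx : 0 ≤ x) (hxy : x ≤ y) : τ x ≤ τ y := by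
  have h1 : 0 ≤ y - x := sub_nonneg.mpr hxy
  have := hadd x (y - x) hx h1
  rw [add_sub_cancel] at this
  rw [this]
  exact le_self_add

/-- Sum of nonneg scalar multiples of nonneg elements: positivity and additivity of τ. -/
lemma tau_finsum (hadd : ∀ x y : A, 0 ≤ x → 0 ≤ y → τ (x + y) = τ x + τ y)
    (hhomog : ∀ (t : ℝ) (x : A), 0 ≤ t → 0 ≤ x → τ (t • x) = ENNReal.ofReal t * τ x)
    (t : Finset A) (f : A → ℝ) (hf : ∀ i ∈ t, 0 ≤ f i) (hg : ∀ i ∈ t, 0 ≤ i) :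
    0 ≤ ∑ i ∈ t, f i • i ∧
      τ (∑ i ∈ t, f i • i) = ∑ i ∈ t, ENNReal.ofReal (f i) * τ i := by
  classical
  induction t using Finset.induction with
  | empty => simpa using tau_zero τ hhomog
  | insert _ _ hnotmem =>
    rename_i a s ih
    have hfa : 0 ≤ f a := hf a (Finset.mem_insert_self a s)
    have hga : 0 ≤ a := hg a (Finset.mem_insert_self a s)
    have hf' : ∀ i ∈ s, 0 ≤ f i := fun i hi => hf i (Finset.mem_insert_of_mem hi)
    have hg' : ∀ i ∈ s, 0 ≤ i := fun i hi => hg i (Finset.mem_insert_of_mem hi)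
    obtain ⟨hpos, heq⟩ := ih hf' hg'
    have h1 : 0 ≤ f a • a := smul_nonneg'' (f a) hfa hga
    constructor
    · rw [Finset.sum_insert hnotmem]; exact add_nonneg h1 hpos
    · rw [Finset.sum_insert hnotmem, Finset.sum_insert hnotmem,
        hadd _ _ h1 hpos, heq, hhomog _ _ hfa hga]

end tau

variable (τ : A → ℝ≥0∞)


lemma wdR (hadd : ∀ x y : A, 0 ≤ x → 0 ≤ y → τ (x + y) = τ x + τ y)
    (hhomog : ∀ (t : ℝ) (x : A), 0 ≤ t → 0 ≤ x → τ (t • x) = ENNReal.ofReal t * τ x)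
    (t : Finset A) (f : A → ℝ) (hS : ∀ a ∈ t, 0 ≤ a ∧ τ a < ⊤)
    (h0 : ∑ a ∈ t, f a • a = 0) :
    ∑ a ∈ t, f a * (τ a).toReal = 0 := by
  classical
  set tp := t.filter (fun a => 0 ≤ f a) with htp
  set tn := t.filter (fun a => ¬ 0 ≤ f a) with htn
  have hsplit : ∑ a ∈ tp, f a • a + ∑ a ∈ tn, f a • a = 0 := by
    rw [Finset.sum_filter_add_sum_filter_not]; exact h0
  have heq : ∑ a ∈ tp, f a • a = ∑ a ∈ tn, (-f a) • a := by
    have h2 : ∑ a ∈ tn, (-f a) • a = -∑ a ∈ tn, f a • a := by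
      rw [← Finset.sum_neg_distrib]; exact Finset.sum_congr rfl fun a _ => (neg_smul _ _)
    rw [h2]; exact eq_neg_of_add_eq_zero_left hsplit
  have hfp : ∀ a ∈ tp, 0 ≤ f a := fun a ha => (Finset.mem_filter.mp ha).2
  have hfn : ∀ a ∈ tn, 0 ≤ -f a := fun a ha => by
    have := (Finset.mem_filter.mp ha).2; push_neg at this; linarith
  have hSp : ∀ a ∈ tp, 0 ≤ a := fun a ha => (hS a (Finset.mem_filter.mp ha).1).1
  have hSn : ∀ a ∈ tn, 0 ≤ a := fun a ha => (hS a (Finset.mem_filter.mp ha).1).1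
  have e1 := (tau_finsum τ hadd hhomog tp f hfp hSp).2
  have e2 := (tau_finsum τ hadd hhomog tn (fun a => -f a) hfn hSn).2
  rw [heq, e2] at e1
  -- e1 : ∑ tp ofReal (f a) * τ a = ∑ tn ofReal (-f a) * τ a
  have hfin : ∀ (s : Finset A) (g : A → ℝ), (∀ a ∈ s, a ∈ t) →
      (∑ a ∈ s, ENNReal.ofReal (g a) * τ a).toReal
        = ∑ a ∈ s, (ENNReal.ofReal (g a) * τ a).toReal := by
    intro s g hsub
    refine ENNReal.toReal_sum fun a ha => ?_
    exact ENNReal.mul_ne_top ENNReal.ofReal_ne_top (hS a (hsub a ha)).2.ne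
  have e3 : ∑ a ∈ tp, (ENNReal.ofReal (f a) * τ a).toReal
      = ∑ a ∈ tn, (ENNReal.ofReal (-f a) * τ a).toReal := by
    rw [← hfin tp f (fun a ha => (Finset.mem_filter.mp ha).1),
        ← hfin tn (fun a => -f a) (fun a ha => (Finset.mem_filter.mp ha).1), e1]
  have e4 : ∑ a ∈ tp, f a * (τ a).toReal = ∑ a ∈ tn, (-f a) * (τ a).toReal := by
    calc ∑ a ∈ tp, f a * (τ a).toReal
        = ∑ a ∈ tp, (ENNReal.ofReal (f a) * τ a).toReal := by
          refine Finset.sum_congr rfl fun a ha => ?_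
          rw [ENNReal.toReal_mul, ENNReal.toReal_ofReal (hfp a ha)]
      _ = ∑ a ∈ tn, (ENNReal.ofReal (-f a) * τ a).toReal := e3
      _ = ∑ a ∈ tn, (-f a) * (τ a).toReal := by
          refine Finset.sum_congr rfl fun a ha => ?_
          rw [ENNReal.toReal_mul, ENNReal.toReal_ofReal (hfn a ha)]
  have : ∑ a ∈ tp, f a * (τ a).toReal + ∑ a ∈ tn, f a * (τ a).toReal = 0 := by
    have h5 : ∑ a ∈ tn, (-f a) * (τ a).toReal = -∑ a ∈ tn, f a * (τ a).toReal := by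
      rw [← Finset.sum_neg_distrib]; exact Finset.sum_congr rfl fun a _ => by ring
    rw [e4, h5]; ring
  calc ∑ a ∈ t, f a * (τ a).toReal
      = ∑ a ∈ tp, f a * (τ a).toReal + ∑ a ∈ tn, f a * (τ a).toReal :=
        (Finset.sum_filter_add_sum_filter_not t _ _).symm
    _ = 0 := this

lemma wdC (hadd : ∀ x y : A, 0 ≤ x → 0 ≤ y → τ (x + y) = τ x + τ y)
    (hhomog : ∀ (t : ℝ) (x : A), 0 ≤ t → 0 ≤ x → τ (t • x) = ENNReal.ofReal t * τ x)
    (t : Finset A) (c : A → ℂ) (hS : ∀ a ∈ t, 0 ≤ a ∧ τ a < ⊤)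
    (h0 : ∑ a ∈ t, c a • a = 0) :
    ∑ a ∈ t, c a * ((τ a).toReal : ℂ) = 0 := by
  classical
  have hsa : ∀ a ∈ t, star a = a := fun a ha => (hS a ha).1.isSelfAdjoint.star_eq
  have hstar : ∑ a ∈ t, (starRingEnd ℂ) (c a) • a = 0 := by
    have := congrArg (star ·) h0
    simp only [star_sum, star_smul, star_zero] at this
    rw [← this]
    exact (Finset.sum_congr rfl fun a ha => by rw [hsa a ha, Complex.star_def]).symm
  -- real part
  have hre : ∑ a ∈ t, (c a).re • a = 0 := by
    have h2 : ∑ a ∈ t, ((2 * (c a).re : ℝ) : ℂ) • a = 0 := by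
      have h3 : ∑ a ∈ t, (c a + (starRingEnd ℂ) (c a)) • a = 0 := by
        calc ∑ a ∈ t, (c a + (starRingEnd ℂ) (c a)) • a
            = ∑ a ∈ t, c a • a + ∑ a ∈ t, (starRingEnd ℂ) (c a) • a := by
              rw [← Finset.sum_add_distrib]
              exact Finset.sum_congr rfl fun a _ => (add_smul _ _ _)
          _ = 0 := by rw [h0, hstar, add_zero]
      rw [← h3]
      refine Finset.sum_congr rfl fun a _ => ?_
      congr 1
      rw [Complex.add_conj]
      try push_cast
      try ring
    have h4 : ∑ a ∈ t, (2 * (c a).re) • a = 0 := by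
      rw [← h2]; exact Finset.sum_congr rfl fun a _ => (real_smul_eq _ _).symm
    have h5 : (2:ℝ) • ∑ a ∈ t, (c a).re • a = 0 := by
      rw [Finset.smul_sum, ← h4]
      exact Finset.sum_congr rfl fun a _ => by rw [smul_smul]
    have := congrArg (fun z => (2:ℝ)⁻¹ • z) h5
    simpa [smul_smul] using this
  -- imaginary part
  have him : ∑ a ∈ t, (c a).im • a = 0 := by
    have h3 : ∑ a ∈ t, (c a - (starRingEnd ℂ) (c a)) • a = 0 := by
      calc ∑ a ∈ t, (c a - (starRingEnd ℂ) (c a)) • a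
          = ∑ a ∈ t, c a • a - ∑ a ∈ t, (starRingEnd ℂ) (c a) • a := by
            rw [← Finset.sum_sub_distrib]
            exact Finset.sum_congr rfl fun a _ => (sub_smul _ _ _)
        _ = 0 := by rw [h0, hstar, sub_zero]
    have h2 : ∑ a ∈ t, (((c a).im : ℝ) : ℂ) • a = 0 := by
      have h6 : ∑ a ∈ t, ((-Complex.I/2) * (c a - (starRingEnd ℂ) (c a))) • a = 0 := by
        have := congrArg (fun z => (-Complex.I/2) • z) h3
        simp only [Finset.smul_sum, smul_zero] at this
        rw [← this]
        exact Finset.sum_congr rfl fun a _ => by rw [smul_smul]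
      rw [← h6]
      refine Finset.sum_congr rfl fun a _ => ?_
      congr 1
      rw [Complex.sub_conj]
      push_cast
      linear_combination ((c a).im : ℂ) * Complex.I_sq
    have h4 : ∑ a ∈ t, (c a).im • a = 0 := by
      rw [← h2]; exact Finset.sum_congr rfl fun a _ => (real_smul_eq _ _).symm
    exact h4
  have hr := wdR τ hadd hhomog t (fun a => (c a).re) hS hre
  have hi := wdR τ hadd hhomog t (fun a => (c a).im) hS him
  calc ∑ a ∈ t, c a * ((τ a).toReal : ℂ)
      = ∑ a ∈ t, (((c a).re * (τ a).toReal : ℝ) : ℂ)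
        + (∑ a ∈ t, (((c a).im * (τ a).toReal : ℝ) : ℂ)) * Complex.I := by
        rw [Finset.sum_mul, ← Finset.sum_add_distrib]
        refine Finset.sum_congr rfl fun a _ => ?_
        apply Complex.ext <;> simp <;> ring
    _ = 0 := by
        rw [← Complex.ofReal_sum, ← Complex.ofReal_sum, hr, hi]
        simp




section sig
variable (τ : A → ℝ≥0∞)

def SS : Set A := {x : A | 0 ≤ x ∧ τ x < ⊤}

def Vsp : Submodule ℂ A := Submodule.span ℂ (SS τ)

/-- the elementary sum of a finsupp representation -/
noncomputable def rsum (l : A →₀ ℂ) : A := l.sum fun a c => c • a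

noncomputable def rval (l : A →₀ ℂ) : ℂ := l.sum fun a c => c * ((τ a).toReal : ℂ)

open scoped Classical in
noncomputable def sig (x : A) : ℂ :=
  if h : ∃ l : A →₀ ℂ, ↑l.support ⊆ SS τ ∧ rsum l = x then rval τ h.choose else 0

variable (hadd : ∀ x y : A, 0 ≤ x → 0 ≤ y → τ (x + y) = τ x + τ y)
  (hhomog : ∀ (t : ℝ) (x : A), 0 ≤ t → 0 ≤ x → τ (t • x) = ENNReal.ofReal t * τ x)

lemma rsum_sub (l₁ l₂ : A →₀ ℂ) : rsum (l₁ - l₂) = rsum l₁ - rsum l₂ :=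
  Finsupp.sum_sub_index fun a b₁ b₂ => sub_smul b₁ b₂ a

lemma rval_sub (l₁ l₂ : A →₀ ℂ) : rval τ (l₁ - l₂) = rval τ l₁ - rval τ l₂ :=
  Finsupp.sum_sub_index fun a b₁ b₂ => sub_mul b₁ b₂ _

include hadd hhomog in
lemma rval_eq_of_rsum_eq {l₁ l₂ : A →₀ ℂ} (h₁ : ↑l₁.support ⊆ SS τ) (h₂ : ↑l₂.support ⊆ SS τ)
    (h : rsum l₁ = rsum l₂) : rval τ l₁ = rval τ l₂ := by
  classical
  have hd : rsum (l₁ - l₂) = 0 := by rw [rsum_sub, h, sub_self]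
  have hds : ∀ a ∈ (l₁ - l₂).support, 0 ≤ a ∧ τ a < ⊤ := by
    intro a ha
    have h' := Finsupp.support_sub (f := l₁) (g := l₂) ha
    rcases Finset.mem_union.mp h' with h'' | h''
    · exact h₁ h''
    · exact h₂ h''
  have h0 : rval τ (l₁ - l₂) = 0 := by
    have := wdC τ hadd hhomog (l₁ - l₂).support ⇑(l₁ - l₂) hds (by rw [← hd]; rfl)
    rw [rval, Finsupp.sum]; exact this
  have h2 := rval_sub τ l₁ l₂
  rw [h0] at h2
  exact (sub_eq_zero.mp h2.symm)

include hadd hhomog in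
lemma sig_eq {x : A} (l : A →₀ ℂ) (hl : ↑l.support ⊆ SS τ) (hx : rsum l = x) :
    sig τ x = rval τ l := by
  classical
  have hex : ∃ l' : A →₀ ℂ, ↑l'.support ⊆ SS τ ∧ rsum l' = x := ⟨l, hl, hx⟩
  rw [sig, dif_pos hex]
  obtain ⟨hl', hx'⟩ := hex.choose_spec
  exact rval_eq_of_rsum_eq τ hadd hhomog hl' hl (by rw [hx', hx])

lemma mem_rep {x : A} (hx : x ∈ Vsp τ) :
    ∃ l : A →₀ ℂ, ↑l.support ⊆ SS τ ∧ rsum l = x := Submodule.mem_span_set.mp hx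

include hadd hhomog in
lemma sig_add {x y : A} (hx : x ∈ Vsp τ) (hy : y ∈ Vsp τ) :
    sig τ (x + y) = sig τ x + sig τ y := by
  classical
  obtain ⟨lx, hlx, hlx'⟩ := mem_rep τ hx
  obtain ⟨ly, hly, hly'⟩ := mem_rep τ hy
  have hsup : ↑(lx + ly).support ⊆ SS τ := by
    intro a ha
    have h' := Finsupp.support_add (g₁ := lx) (g₂ := ly) ha
    rcases Finset.mem_union.mp h' with h'' | h''
    · exact hlx h''
    · exact hly h''
  have hsum : rsum (lx + ly) = x + y := by
    rw [rsum, Finsupp.sum_add_index' (fun a => zero_smul ℂ a) (fun a b₁ b₂ => add_smul b₁ b₂ a)]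
    rw [← hlx', ← hly']; rfl
  have hval : rval τ (lx + ly) = rval τ lx + rval τ ly := by
    rw [rval, Finsupp.sum_add_index' (fun a => by simp) (fun a b₁ b₂ => add_mul b₁ b₂ _)]
    rfl
  rw [sig_eq τ hadd hhomog (lx + ly) hsup hsum, hval,
    ← sig_eq τ hadd hhomog lx hlx hlx', ← sig_eq τ hadd hhomog ly hly hly']

include hadd hhomog in
lemma sig_smul (c : ℂ) {x : A} (hx : x ∈ Vsp τ) :
    sig τ (c • x) = c * sig τ x := by
  classical
  obtain ⟨l, hl, hl'⟩ := mem_rep τ hx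
  have hsup : ↑(c • l).support ⊆ SS τ := by
    intro a ha
    exact hl (Finsupp.support_smul (b := c) (g := l) ha)
  have hsum : rsum (c • l) = c • x := by
    rw [rsum, Finsupp.sum_smul_index' (fun a => zero_smul ℂ a)]
    rw [← hl', rsum, Finsupp.smul_sum]
    exact Finsupp.sum_congr fun a _ => by rw [smul_eq_mul, mul_smul]
  have hval : rval τ (c • l) = c * rval τ l := by
    rw [rval, Finsupp.sum_smul_index' (fun a => by simp), rval, Finsupp.mul_sum]
    exact Finsupp.sum_congr fun a _ => by rw [smul_eq_mul, mul_assoc]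
  rw [sig_eq τ hadd hhomog (c • l) hsup hsum, hval, ← sig_eq τ hadd hhomog l hl hl']

include hadd hhomog in
lemma sig_S {s : A} (hs : s ∈ SS τ) : sig τ s = ((τ s).toReal : ℂ) := by
  classical
  have hsup : ↑(Finsupp.single s (1:ℂ)).support ⊆ SS τ := by
    intro a ha
    have := Finsupp.support_single_subset (a := s) (b := (1:ℂ)) ha
    simp at this
    rwa [this]
  have hsum : rsum (Finsupp.single s (1:ℂ)) = s := by
    rw [rsum, Finsupp.sum_single_index (zero_smul ℂ s), one_smul]
  have hval : rval τ (Finsupp.single s (1:ℂ)) = ((τ s).toReal : ℂ) := by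
    rw [rval, Finsupp.sum_single_index (by simp), one_mul]
  rw [sig_eq τ hadd hhomog _ hsup hsum, hval]

include hadd hhomog in
lemma sig_neg {x : A} (hx : x ∈ Vsp τ) : sig τ (-x) = -sig τ x := by
  have := sig_smul τ hadd hhomog (-1 : ℂ) hx
  simpa using this

include hadd hhomog in
lemma sig_sub {x y : A} (hx : x ∈ Vsp τ) (hy : y ∈ Vsp τ) :
    sig τ (x - y) = sig τ x - sig τ y := by
  rw [sub_eq_add_neg, sig_add τ hadd hhomog hx (Submodule.neg_mem _ hy),
    sig_neg τ hadd hhomog hy, sub_eq_add_neg]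

include hadd hhomog in
lemma tau_lt_top_of_mem {x : A} (hx : x ∈ Vsp τ) (hx0 : 0 ≤ x) : τ x < ⊤ := by
  classical
  obtain ⟨l, hl, hl'⟩ := mem_rep τ hx
  set t := l.support with ht
  have hmem : ∀ a ∈ t, 0 ≤ a ∧ τ a < ⊤ := fun a ha => hl ha
  have hxsum : x = ∑ a ∈ t, l a • a := by rw [← hl']; rfl
  have hxsa : star x = x := hx0.isSelfAdjoint.star_eq
  have hstar : ∑ a ∈ t, (starRingEnd ℂ) (l a) • a = x := by
    have h1 := congrArg (star ·) hxsum.symm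
    simp only [star_sum, star_smul] at h1
    rw [hxsa] at h1
    rw [← h1]
    exact Finset.sum_congr rfl fun a ha =>
      by rw [(hmem a ha).1.isSelfAdjoint.star_eq, Complex.star_def]
  have hre : ∑ a ∈ t, (l a).re • a = x := by
    have h2 : ∑ a ∈ t, ((l a + (starRingEnd ℂ) (l a))) • a = x + x := by
      calc ∑ a ∈ t, ((l a + (starRingEnd ℂ) (l a))) • a
          = ∑ a ∈ t, l a • a + ∑ a ∈ t, (starRingEnd ℂ) (l a) • a := by
            rw [← Finset.sum_add_distrib]
            exact Finset.sum_congr rfl fun a _ => (add_smul _ _ _)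
        _ = x + x := by rw [← hxsum, hstar]
    have h3 : ∑ a ∈ t, ((2 * (l a).re : ℝ)) • a = x + x := by
      rw [← h2]
      refine Finset.sum_congr rfl fun a _ => ?_
      rw [← real_smul_eq]
      congr 1
      rw [Complex.add_conj]
      try push_cast
      try ring
    have h4 : (2:ℝ) • ∑ a ∈ t, (l a).re • a = (2:ℝ) • x := by
      rw [Finset.smul_sum]
      have : ∀ a ∈ t, (2:ℝ) • ((l a).re • a) = ((2 * (l a).re : ℝ)) • a := fun a _ => by
        rw [smul_smul]
      rw [Finset.sum_congr rfl this, h3, two_smul]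
    have := congrArg (fun z => (2:ℝ)⁻¹ • z) h4
    simpa [smul_smul] using this
  set f : A → ℝ := fun a => max (l a).re 0 with hf
  have hK : x ≤ ∑ a ∈ t, f a • a := by
    rw [← sub_nonneg]
    have hdiff : ∑ a ∈ t, f a • a - x = ∑ a ∈ t, (f a - (l a).re) • a := by
      rw [← hre, ← Finset.sum_sub_distrib]
      exact Finset.sum_congr rfl fun a _ => (sub_smul _ _ _).symm
    rw [hdiff]
    exact (tau_finsum τ hadd hhomog t (fun a => f a - (l a).re)
      (fun a _ => by simp [hf, le_max_iff]) (fun a ha => (hmem a ha).1)).1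
  have hKfin : τ (∑ a ∈ t, f a • a) < ⊤ := by
    rw [(tau_finsum τ hadd hhomog t f (fun a _ => le_max_right _ _)
      (fun a ha => (hmem a ha).1)).2]
    refine ENNReal.sum_lt_top.mpr fun a ha => ?_
    exact ENNReal.mul_lt_top ENNReal.ofReal_lt_top (hmem a ha).2
  exact lt_of_le_of_lt (tau_mono τ hadd hx0 hK) hKfin

end sig






section cstar
variable (τ : A → ℝ≥0∞)

lemma polP (x y : A) :
    star x * y = (1/4 : ℂ) • (star (x + y) * (x + y))
      + (-(1/4) : ℂ) • (star (x - y) * (x - y))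
      + (-(Complex.I/4)) • (star (x + Complex.I • y) * (x + Complex.I • y))
      + (Complex.I/4) • (star (x - Complex.I • y) * (x - Complex.I • y)) := by
  simp only [star_add, star_sub, star_smul, add_mul, mul_add, sub_mul, mul_sub,
    smul_mul_assoc, mul_smul_comm, smul_smul, smul_sub, smul_add]
  match_scalars <;> (field_simp; (try linear_combination Complex.I_sq); (try norm_num))

lemma polQ (x y : A) :
    y * star x = (1/4 : ℂ) • ((x + y) * star (x + y))
      + (-(1/4) : ℂ) • ((x - y) * star (x - y))
      + (-(Complex.I/4)) • ((x + Complex.I • y) * star (x + Complex.I • y))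
      + (Complex.I/4) • ((x - Complex.I • y) * star (x - Complex.I • y)) := by
  simp only [star_add, star_sub, star_smul, add_mul, mul_add, sub_mul, mul_sub,
    smul_mul_assoc, mul_smul_comm, smul_smul, smul_sub, smul_add]
  match_scalars <;> (field_simp; (try linear_combination Complex.I_sq); (try norm_num))

variable (hadd : ∀ x y : A, 0 ≤ x → 0 ≤ y → τ (x + y) = τ x + τ y)
  (hhomog : ∀ (t : ℝ) (x : A), 0 ≤ t → 0 ≤ x → τ (t • x) = ENNReal.ofReal t * τ x)
  (htracial : ∀ x : A, τ (star x * x) = τ (x * star x))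

include hadd in
lemma nn_add {x y : A} (hx : τ (star x * x) < ⊤) (hy : τ (star y * y) < ⊤) :
    τ (star (x + y) * (x + y)) < ⊤ := by
  have key : star (x + y) * (x + y)
      ≤ (star x * x + star y * y) + (star x * x + star y * y) := by
    rw [← sub_nonneg]
    have hident : (star x * x + star y * y) + (star x * x + star y * y)
        - star (x + y) * (x + y) = star (x - y) * (x - y) := by
      simp only [star_add, star_sub]
      noncomm_ring
    rw [hident]
    exact star_mul_self_nonneg _
  have hfin : τ ((star x * x + star y * y) + (star x * x + star y * y)) < ⊤ := by
    have h1 : 0 ≤ star x * x + star y * y :=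
      add_nonneg (star_mul_self_nonneg x) (star_mul_self_nonneg y)
    rw [hadd _ _ h1 h1, hadd _ _ (star_mul_self_nonneg x) (star_mul_self_nonneg y)]
    exact ENNReal.add_lt_top.mpr ⟨ENNReal.add_lt_top.mpr ⟨hx, hy⟩, ENNReal.add_lt_top.mpr ⟨hx, hy⟩⟩
  exact lt_of_le_of_lt (tau_mono τ hadd (star_mul_self_nonneg _) key) hfin

include hhomog in
lemma nn_smul (c : ℂ) {x : A} (hx : τ (star x * x) < ⊤) :
    τ (star (c • x) * (c • x)) < ⊤ := by
  have h1 : star (c • x) * (c • x) = (Complex.normSq c : ℝ) • (star x * x) := by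
    rw [star_smul, smul_mul_smul_comm, ← real_smul_eq]
    congr 1
    rw [Complex.star_def, ← Complex.normSq_eq_conj_mul_self]
  rw [h1, hhomog _ _ (Complex.normSq_nonneg c) (star_mul_self_nonneg x)]
  exact ENNReal.mul_lt_top ENNReal.ofReal_lt_top hx

include hadd hhomog in
lemma nn_S {s : A} (hs : s ∈ SS τ) : τ (star s * s) < ⊤ := by
  obtain ⟨hs0, hsfin⟩ := hs
  set r := CFC.sqrt s with hrdef
  have hr0 : 0 ≤ r := CFC.sqrt_nonneg s
  have hrr : r * r = s := CFC.sqrt_mul_sqrt_self s hs0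
  have hrsa : star r = r := hr0.isSelfAdjoint.star_eq
  have hconj : star r * s * r ≤ ‖s‖ • (star r * r) :=
    CStarAlgebra.star_left_conjugate_le_norm_smul hs0.isSelfAdjoint
  have h2 : star s * s = star r * s * r := by
    rw [hs0.isSelfAdjoint.star_eq, hrsa, ← hrr]
    noncomm_ring
  have h3 : τ (star s * s) ≤ τ (‖s‖ • (star r * r)) := by
    rw [h2]
    exact tau_mono τ hadd (h2 ▸ star_mul_self_nonneg s) hconj
  rw [hrsa, hrr] at h3
  calc τ (star s * s) ≤ τ (‖s‖ • s) := h3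
    _ = ENNReal.ofReal ‖s‖ * τ s := hhomog _ _ (norm_nonneg s) hs0
    _ < ⊤ := ENNReal.mul_lt_top ENNReal.ofReal_lt_top hsfin

include hadd hhomog in
lemma sig_comb4 (c₀ c₁ c₂ c₃ : ℂ) (p₀ p₁ p₂ p₃ : A) (h₀ : p₀ ∈ SS τ) (h₁ : p₁ ∈ SS τ)
    (h₂ : p₂ ∈ SS τ) (h₃ : p₃ ∈ SS τ) :
    sig τ (c₀ • p₀ + c₁ • p₁ + c₂ • p₂ + c₃ • p₃)
      = c₀ * ((τ p₀).toReal : ℂ) + c₁ * ((τ p₁).toReal : ℂ)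
        + c₂ * ((τ p₂).toReal : ℂ) + c₃ * ((τ p₃).toReal : ℂ) := by
  have m₀ : p₀ ∈ Vsp τ := Submodule.subset_span h₀
  have m₁ : p₁ ∈ Vsp τ := Submodule.subset_span h₁
  have m₂ : p₂ ∈ Vsp τ := Submodule.subset_span h₂
  have m₃ : p₃ ∈ Vsp τ := Submodule.subset_span h₃
  have s₀ : c₀ • p₀ ∈ Vsp τ := Submodule.smul_mem _ _ m₀
  have s₁ : c₁ • p₁ ∈ Vsp τ := Submodule.smul_mem _ _ m₁
  have s₂ : c₂ • p₂ ∈ Vsp τ := Submodule.smul_mem _ _ m₂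
  have s₃ : c₃ • p₃ ∈ Vsp τ := Submodule.smul_mem _ _ m₃
  rw [sig_add τ hadd hhomog (Submodule.add_mem _ (Submodule.add_mem _ s₀ s₁) s₂) s₃,
    sig_add τ hadd hhomog (Submodule.add_mem _ s₀ s₁) s₂,
    sig_add τ hadd hhomog s₀ s₁,
    sig_smul τ hadd hhomog c₀ m₀, sig_smul τ hadd hhomog c₁ m₁,
    sig_smul τ hadd hhomog c₂ m₂, sig_smul τ hadd hhomog c₃ m₃,
    sig_S τ hadd hhomog h₀, sig_S τ hadd hhomog h₁,
    sig_S τ hadd hhomog h₂, sig_S τ hadd hhomog h₃]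

include hadd hhomog htracial in
lemma pol {x y : A} (hx : τ (star x * x) < ⊤) (hy : τ (star y * y) < ⊤) :
    star x * y ∈ Vsp τ ∧ y * star x ∈ Vsp τ ∧ sig τ (star x * y) = sig τ (y * star x) := by
  have hy' : τ (star (Complex.I • y) * (Complex.I • y)) < ⊤ := nn_smul τ hhomog _ hy
  have hny : τ (star (-y) * (-y)) < ⊤ := by simpa using nn_smul τ hhomog (-1 : ℂ) hy
  have hny' : τ (star (-(Complex.I • y)) * (-(Complex.I • y))) < ⊤ := by
    simpa using nn_smul τ hhomog (-Complex.I : ℂ) hy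
  have f₀ : τ (star (x + y) * (x + y)) < ⊤ := nn_add τ hadd hx hy
  have f₁ : τ (star (x - y) * (x - y)) < ⊤ := by
    rw [sub_eq_add_neg]; exact nn_add τ hadd hx hny
  have f₂ : τ (star (x + Complex.I • y) * (x + Complex.I • y)) < ⊤ := nn_add τ hadd hx hy'
  have f₃ : τ (star (x - Complex.I • y) * (x - Complex.I • y)) < ⊤ := by
    rw [sub_eq_add_neg]; exact nn_add τ hadd hx hny'
  have hP : ∀ u : A, 0 ≤ star u * u := star_mul_self_nonneg
  have hQ : ∀ u : A, 0 ≤ u * star u := mul_star_self_nonneg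
  have SP₀ : (star (x + y) * (x + y)) ∈ SS τ := ⟨hP _, f₀⟩
  have SP₁ : (star (x - y) * (x - y)) ∈ SS τ := ⟨hP _, f₁⟩
  have SP₂ : (star (x + Complex.I • y) * (x + Complex.I • y)) ∈ SS τ := ⟨hP _, f₂⟩
  have SP₃ : (star (x - Complex.I • y) * (x - Complex.I • y)) ∈ SS τ := ⟨hP _, f₃⟩
  have SQ₀ : ((x + y) * star (x + y)) ∈ SS τ := ⟨hQ _, htracial _ ▸ f₀⟩
  have SQ₁ : ((x - y) * star (x - y)) ∈ SS τ := ⟨hQ _, htracial _ ▸ f₁⟩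
  have SQ₂ : ((x + Complex.I • y) * star (x + Complex.I • y)) ∈ SS τ := ⟨hQ _, htracial _ ▸ f₂⟩
  have SQ₃ : ((x - Complex.I • y) * star (x - Complex.I • y)) ∈ SS τ := ⟨hQ _, htracial _ ▸ f₃⟩
  have combP : star x * y ∈ Vsp τ := by
    rw [polP]
    exact Submodule.add_mem _ (Submodule.add_mem _ (Submodule.add_mem _
      (Submodule.smul_mem _ _ (Submodule.subset_span SP₀))
      (Submodule.smul_mem _ _ (Submodule.subset_span SP₁)))
      (Submodule.smul_mem _ _ (Submodule.subset_span SP₂)))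
      (Submodule.smul_mem _ _ (Submodule.subset_span SP₃))
  have combQ : y * star x ∈ Vsp τ := by
    rw [polQ]
    exact Submodule.add_mem _ (Submodule.add_mem _ (Submodule.add_mem _
      (Submodule.smul_mem _ _ (Submodule.subset_span SQ₀))
      (Submodule.smul_mem _ _ (Submodule.subset_span SQ₁)))
      (Submodule.smul_mem _ _ (Submodule.subset_span SQ₂)))
      (Submodule.smul_mem _ _ (Submodule.subset_span SQ₃))
  refine ⟨combP, combQ, ?_⟩
  rw [polP, polQ, sig_comb4 τ hadd hhomog _ _ _ _ _ _ _ _ SP₀ SP₁ SP₂ SP₃,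
    sig_comb4 τ hadd hhomog _ _ _ _ _ _ _ _ SQ₀ SQ₁ SQ₂ SQ₃,
    htracial (x + y), htracial (x - y), htracial (x + Complex.I • y),
    htracial (x - Complex.I • y)]

lemma Vsp_star {x : A} (hx : x ∈ Vsp τ) : star x ∈ Vsp τ := by
  induction hx using Submodule.span_induction with
  | mem s hs => rw [hs.1.isSelfAdjoint.star_eq]; exact Submodule.subset_span hs
  | zero => rw [star_zero]; exact Submodule.zero_mem _
  | add a b ha hb iha ihb => rw [star_add]; exact Submodule.add_mem _ iha ihb
  | smul c a ha iha => rw [star_smul]; exact Submodule.smul_mem _ _ iha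

include hadd hhomog htracial in
lemma cyc {m : A} (hm : m ∈ Vsp τ) (z : A) :
    m * z ∈ Vsp τ ∧ z * m ∈ Vsp τ ∧ sig τ (m * z) = sig τ (z * m) := by
  induction hm using Submodule.span_induction with
  | mem s hs =>
    obtain ⟨hs0, hsfin⟩ := hs
    set r := CFC.sqrt s with hrdef
    have hr0 : 0 ≤ r := CFC.sqrt_nonneg s
    have hrr : r * r = s := CFC.sqrt_mul_sqrt_self s hs0
    have hrsa : star r = r := hr0.isSelfAdjoint.star_eq
    have hfr : τ (star r * r) < ⊤ := by rw [hrsa, hrr]; exact hsfin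
    -- finiteness for r * z
    have hfin1 : τ (star (r * z) * (r * z)) < ⊤ := by
      have e1 : (r * z) * star (r * z) = star r * (z * star z) * r := by
        rw [star_mul, hrsa]; noncomm_ring
      have hle : star r * (z * star z) * r ≤ ‖z * star z‖ • (star r * r) :=
        CStarAlgebra.star_left_conjugate_le_norm_smul (mul_star_self_nonneg z).isSelfAdjoint
      calc τ (star (r * z) * (r * z)) = τ ((r * z) * star (r * z)) := htracial _
        _ = τ (star r * (z * star z) * r) := by rw [e1]
        _ ≤ τ (‖z * star z‖ • (star r * r)) :=
            tau_mono τ hadd (e1 ▸ mul_star_self_nonneg (r * z)) hle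
        _ = ENNReal.ofReal ‖z * star z‖ * τ (star r * r) :=
            hhomog _ _ (norm_nonneg _) (star_mul_self_nonneg r)
        _ < ⊤ := ENNReal.mul_lt_top ENNReal.ofReal_lt_top hfr
    -- finiteness for z * r
    have hfin2 : τ (star (z * r) * (z * r)) < ⊤ := by
      have e2 : star (z * r) * (z * r) = star r * (star z * z) * r := by
        rw [star_mul, hrsa]; noncomm_ring
      have hle : star r * (star z * z) * r ≤ ‖star z * z‖ • (star r * r) :=
        CStarAlgebra.star_left_conjugate_le_norm_smul (star_mul_self_nonneg z).isSelfAdjoint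
      calc τ (star (z * r) * (z * r)) = τ (star r * (star z * z) * r) := by rw [e2]
        _ ≤ τ (‖star z * z‖ • (star r * r)) :=
            tau_mono τ hadd (e2 ▸ star_mul_self_nonneg (z * r)) hle
        _ = ENNReal.ofReal ‖star z * z‖ * τ (star r * r) :=
            hhomog _ _ (norm_nonneg _) (star_mul_self_nonneg r)
        _ < ⊤ := ENNReal.mul_lt_top ENNReal.ofReal_lt_top hfr
    obtain ⟨p1a, p1b, p1c⟩ := pol τ hadd hhomog htracial hfr hfin1
    obtain ⟨p2a, p2b, p2c⟩ := pol τ hadd hhomog htracial hfr hfin2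
    -- p1a : star r * (r * z) ∈ V ; p1b : (r * z) * star r ∈ V
    -- p2a : star r * (z * r) ∈ V ; p2b : (z * r) * star r ∈ V
    have id1 : star r * (r * z) = s * z := by rw [hrsa, ← mul_assoc, hrr]
    have id2 : (z * r) * star r = z * s := by rw [hrsa, mul_assoc, hrr]
    have id3 : (r * z) * star r = star r * (z * r) := by rw [hrsa]; noncomm_ring
    refine ⟨id1 ▸ p1a, id2 ▸ p2b, ?_⟩
    calc sig τ (s * z) = sig τ (star r * (r * z)) := by rw [id1]
      _ = sig τ ((r * z) * star r) := p1c
      _ = sig τ (star r * (z * r)) := by rw [id3]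
      _ = sig τ ((z * r) * star r) := p2c
      _ = sig τ (z * s) := by rw [id2]
  | zero => simp [Submodule.zero_mem]
  | add m₁ m₂ hm₁ hm₂ ih₁ ih₂ =>
    obtain ⟨a1, b1, c1⟩ := ih₁
    obtain ⟨a2, b2, c2⟩ := ih₂
    refine ⟨?_, ?_, ?_⟩
    · rw [add_mul]; exact Submodule.add_mem _ a1 a2
    · rw [mul_add]; exact Submodule.add_mem _ b1 b2
    · rw [add_mul, mul_add, sig_add τ hadd hhomog a1 a2, sig_add τ hadd hhomog b1 b2, c1, c2]
  | smul c m hm ih =>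
    obtain ⟨a1, b1, c1⟩ := ih
    refine ⟨?_, ?_, ?_⟩
    · rw [smul_mul_assoc]; exact Submodule.smul_mem _ _ a1
    · rw [mul_smul_comm]; exact Submodule.smul_mem _ _ b1
    · rw [smul_mul_assoc, mul_smul_comm, sig_smul τ hadd hhomog c a1,
        sig_smul τ hadd hhomog c b1, c1]

end cstar





open scoped ComplexOrder in
theorem isUnit_one_add_inr (y : A) (hy : 0 ≤ y) :
    IsUnit ((1 : Unitization ℂ A) + (y : Unitization ℂ A)) := by
  have h1 : (-1 : ℂ) ∉ quasispectrum ℂ y := by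
    intro h
    have := quasispectrum_nonneg_of_nonneg y hy (-1) h
    norm_num at this
  rw [Unitization.quasispectrum_eq_spectrum_inr' ℂ ℂ y] at h1
  have h2 := spectrum.notMem_iff.mp h1
  have h3 : (algebraMap ℂ (Unitization ℂ A)) (-1) - (y : Unitization ℂ A)
      = -((1 : Unitization ℂ A) + (y : Unitization ℂ A)) := by
    rw [map_neg, map_one]; abel
  rw [h3] at h2
  simpa using h2.neg

section Ulayer
variable (τ : A → ℝ≥0∞)
  (hadd : ∀ x y : A, 0 ≤ x → 0 ≤ y → τ (x + y) = τ x + τ y)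
  (hhomog : ∀ (t : ℝ) (x : A), 0 ≤ t → 0 ≤ x → τ (t • x) = ENNReal.ofReal t * τ x)
  (htracial : ∀ x : A, τ (star x * x) = τ (x * star x))

/-- membership predicate on the unitization -/
def Wp (w : Unitization ℂ A) : Prop := w.fst = 0 ∧ w.snd ∈ Vsp τ

/-- trace functional on the unitization -/
noncomputable def sigU (w : Unitization ℂ A) : ℂ := sig τ w.snd

lemma W_inr {m : A} (hm : m ∈ Vsp τ) : Wp τ ((m : Unitization ℂ A)) :=
  ⟨Unitization.fst_inr ℂ m, by rw [Unitization.snd_inr]; exact hm⟩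

lemma W_eq_inr {w : Unitization ℂ A} (hw : Wp τ w) : w = ((w.snd : A) : Unitization ℂ A) :=
  Unitization.ext (by rw [Unitization.fst_inr, hw.1]) (by rw [Unitization.snd_inr])

lemma W_star {w : Unitization ℂ A} (hw : Wp τ w) : Wp τ (star w) :=
  ⟨by rw [Unitization.fst_star, hw.1, star_zero],
   by rw [Unitization.snd_star]; exact Vsp_star τ hw.2⟩

lemma W_add {w₁ w₂ : Unitization ℂ A} (h₁ : Wp τ w₁) (h₂ : Wp τ w₂) : Wp τ (w₁ + w₂) :=
  ⟨by rw [Unitization.fst_add, h₁.1, h₂.1, add_zero],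
   by rw [Unitization.snd_add]; exact Submodule.add_mem _ h₁.2 h₂.2⟩

lemma W_neg {w : Unitization ℂ A} (hw : Wp τ w) : Wp τ (-w) :=
  ⟨by rw [Unitization.fst_neg, hw.1, neg_zero],
   by rw [Unitization.snd_neg]; exact Submodule.neg_mem _ hw.2⟩

lemma W_sub {w₁ w₂ : Unitization ℂ A} (h₁ : Wp τ w₁) (h₂ : Wp τ w₂) : Wp τ (w₁ - w₂) := by
  rw [sub_eq_add_neg]; exact W_add τ h₁ (W_neg τ h₂)

include hadd hhomog htracial in
lemma W_mul_left {w : Unitization ℂ A} (hw : Wp τ w) (z : Unitization ℂ A) : Wp τ (z * w) := by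
  constructor
  · rw [Unitization.fst_mul, hw.1, mul_zero]
  · rw [Unitization.snd_mul, hw.1, zero_smul, add_zero]
    exact Submodule.add_mem _ (Submodule.smul_mem _ _ hw.2)
      (cyc τ hadd hhomog htracial hw.2 z.snd).2.1

include hadd hhomog htracial in
lemma W_mul_right {w : Unitization ℂ A} (hw : Wp τ w) (z : Unitization ℂ A) : Wp τ (w * z) := by
  constructor
  · rw [Unitization.fst_mul, hw.1, zero_mul]
  · rw [Unitization.snd_mul, hw.1, zero_smul, zero_add]
    exact Submodule.add_mem _ (Submodule.smul_mem _ _ hw.2)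
      (cyc τ hadd hhomog htracial hw.2 z.snd).1

include hadd hhomog htracial in
lemma cycU {w : Unitization ℂ A} (hw : Wp τ w) (z : Unitization ℂ A) :
    sigU τ (w * z) = sigU τ (z * w) := by
  have h1 := cyc τ hadd hhomog htracial hw.2 z.snd
  rw [sigU, sigU, Unitization.snd_mul, Unitization.snd_mul, hw.1, zero_smul, zero_add, add_zero]
  rw [sig_add τ hadd hhomog (Submodule.smul_mem _ _ hw.2) h1.1,
    sig_add τ hadd hhomog (Submodule.smul_mem _ _ hw.2) h1.2.1, h1.2.2]

include hadd hhomog in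
lemma sigU_add {w₁ w₂ : Unitization ℂ A} (h₁ : Wp τ w₁) (h₂ : Wp τ w₂) :
    sigU τ (w₁ + w₂) = sigU τ w₁ + sigU τ w₂ := by
  rw [sigU, sigU, sigU, Unitization.snd_add]; exact sig_add τ hadd hhomog h₁.2 h₂.2

include hadd hhomog in
lemma sigU_sub {w₁ w₂ : Unitization ℂ A} (h₁ : Wp τ w₁) (h₂ : Wp τ w₂) :
    sigU τ (w₁ - w₂) = sigU τ w₁ - sigU τ w₂ := by
  have h3 : (w₁ - w₂).snd = w₁.snd - w₂.snd := by
    rw [sub_eq_add_neg, Unitization.snd_add, Unitization.snd_neg, ← sub_eq_add_neg]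
  rw [sigU, sigU, sigU, h3]; exact sig_sub τ hadd hhomog h₁.2 h₂.2

end Ulayer

theorem main
    (τ : A → ℝ≥0∞)
    (hadd : ∀ x y : A, 0 ≤ x → 0 ≤ y → τ (x + y) = τ x + τ y)
    (hhomog : ∀ (t : ℝ) (x : A), 0 ≤ t → 0 ≤ x → τ (t • x) = ENNReal.ofReal t * τ x)
    (hfaithful : ∀ x : A, 0 ≤ x → τ x = 0 → x = 0)
    (htracial : ∀ x : A, τ (star x * x) = τ (x * star x)) :
    ∀ a b : A,
      a ∈ closure (Submodule.span ℂ {x : A | 0 ≤ x ∧ τ x < ⊤} : Set A) →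
      b ∈ closure (Submodule.span ℂ {x : A | 0 ≤ x ∧ τ x < ⊤} : Set A) →
      a + b - a * b = 0 → b + a - b * a = 0 := by
  intro a b ha hb hab
  classical
  -- get an approximant of b in the span
  have hb' : b ∈ closure (Vsp τ : Set A) := hb
  obtain ⟨m', hm'V, hm'close⟩ := Metric.mem_closure_iff.mp hb' 1 one_pos
  rw [dist_eq_norm] at hm'close
  -- the unitization
  set u : Unitization ℂ A := 1 - (a : Unitization ℂ A) with hu
  set v : Unitization ℂ A := 1 - (b : Unitization ℂ A) with hv
  have huv : u * v = 1 := by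
    have h1 : u * v = 1 - ((a : Unitization ℂ A) + (b : Unitization ℂ A)
        - (a : Unitization ℂ A) * (b : Unitization ℂ A)) := by
      rw [hu, hv]; noncomm_ring
    rw [h1, ← Unitization.inr_mul, ← Unitization.inr_add, ← Unitization.inr_sub, hab,
      Unitization.inr_zero, sub_zero]
  -- the invertible g
  have hnorm : ‖((b - m' : A) : Unitization ℂ A)‖ < 1 := by
    rw [Unitization.norm_inr]; exact hm'close
  set g : (Unitization ℂ A)ˣ := Units.oneSub _ hnorm with hg
  have hgval : (g : Unitization ℂ A) = 1 - ((b - m' : A) : Unitization ℂ A) := rfl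
  set y : Unitization ℂ A := (↑g⁻¹ : Unitization ℂ A) * v with hy
  set F : Unitization ℂ A := y - 1 with hF
  have hyF : y = 1 + F := by rw [hF]; abel
  have hvg : v - (g : Unitization ℂ A) = -((m' : A) : Unitization ℂ A) := by
    rw [hgval, hv, Unitization.inr_sub]; abel
  have hFval : F = -((↑g⁻¹ : Unitization ℂ A) * ((m' : A) : Unitization ℂ A)) := by
    rw [hF, hy]
    have : (1 : Unitization ℂ A) = ↑g⁻¹ * ↑g := (Units.inv_mul g).symm
    rw [this, ← mul_sub, hvg, mul_neg]
  have hWF : Wp τ F := by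
    rw [hFval]
    exact W_neg τ (W_mul_left τ hadd hhomog htracial (W_inr τ hm'V) _)
  have hWFs : Wp τ (star F) := W_star τ hWF
  set X : Unitization ℂ A := star (g : Unitization ℂ A) * (star u * u) * (g : Unitization ℂ A)
    with hX
  set qt : Unitization ℂ A := 1 - v * u with hqt
  have hqA : qt = ((b + a - b * a : A) : Unitization ℂ A) := by
    have h1 : v * u = 1 - ((b : Unitization ℂ A) + (a : Unitization ℂ A)
        - (b : Unitization ℂ A) * (a : Unitization ℂ A)) := by
      rw [hu, hv]; noncomm_ring
    rw [hqt, h1, ← Unitization.inr_mul, ← Unitization.inr_add, ← Unitization.inr_sub]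
    abel
  -- identity (i)
  have hGinvG : (↑g⁻¹ : Unitization ℂ A) * ↑g = 1 := Units.inv_mul g
  have hGGinv : (↑g : Unitization ℂ A) * ↑g⁻¹ = 1 := Units.mul_inv g
  have hstar1 : star (↑g⁻¹ : Unitization ℂ A) * star (↑g : Unitization ℂ A) = 1 := by
    rw [← star_mul, hGGinv, star_one]
  have hstar2 : star (↑g : Unitization ℂ A) * star (↑g⁻¹ : Unitization ℂ A) = 1 := by
    rw [← star_mul, hGinvG, star_one]
  have hXy : X * y = star (↑g : Unitization ℂ A) * star u := by
    have h1 : (↑g : Unitization ℂ A) * (↑g⁻¹ * v) = v := by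
      rw [← mul_assoc, hGGinv, one_mul]
    calc X * y = star (↑g : Unitization ℂ A) * (star u * u) * ((↑g : Unitization ℂ A) * (↑g⁻¹ * v)) := by
          rw [hX, hy]; noncomm_ring
      _ = star (↑g : Unitization ℂ A) * (star u * u) * v := by rw [h1]
      _ = star (↑g : Unitization ℂ A) * star u * (u * v) := by noncomm_ring
      _ = star (↑g : Unitization ℂ A) * star u := by rw [huv, mul_one]
  have hyXy : star y * X * y = 1 := by
    have h2 : star y = star v * star (↑g⁻¹ : Unitization ℂ A) := by rw [hy, star_mul]
    calc star y * X * y = star y * (X * y) := by rw [mul_assoc]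
      _ = (star v * star (↑g⁻¹ : Unitization ℂ A)) * (star (↑g : Unitization ℂ A) * star u) := by
          rw [h2, hXy]
      _ = star v * (star (↑g⁻¹ : Unitization ℂ A) * star (↑g : Unitization ℂ A)) * star u := by
          noncomm_ring
      _ = star v * star u := by rw [hstar1, mul_one]
      _ = star (u * v) := (star_mul u v).symm
      _ = 1 := by rw [huv, star_one]
  -- Delta
  set Dl : Unitization ℂ A := star (↑g : Unitization ℂ A) * star qt
      * star (↑g⁻¹ : Unitization ℂ A) with hDl
  have hXyy : X * y * star y = star (↑g : Unitization ℂ A) * star (v * u)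
      * star (↑g⁻¹ : Unitization ℂ A) := by
    have h2 : star y = star v * star (↑g⁻¹ : Unitization ℂ A) := by rw [hy, star_mul]
    calc X * y * star y
        = (star (↑g : Unitization ℂ A) * star u) * (star v * star (↑g⁻¹ : Unitization ℂ A)) := by
          rw [hXy, h2]
      _ = star (↑g : Unitization ℂ A) * (star u * star v) * star (↑g⁻¹ : Unitization ℂ A) := by
          noncomm_ring
      _ = star (↑g : Unitization ℂ A) * star (v * u) * star (↑g⁻¹ : Unitization ℂ A) := by
          rw [star_mul v u]
  have hDelta1 : star y * X * y - X * y * star y = Dl := by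
    rw [hyXy, hXyy, hDl]
    have h3 : star qt = 1 - star (v * u) := by rw [hqt, star_sub, star_one]
    rw [h3]
    have h4 : star (↑g : Unitization ℂ A) * (1 - star (v * u)) * star (↑g⁻¹ : Unitization ℂ A)
        = star (↑g : Unitization ℂ A) * star (↑g⁻¹ : Unitization ℂ A)
          - star (↑g : Unitization ℂ A) * star (v * u) * star (↑g⁻¹ : Unitization ℂ A) := by
      noncomm_ring
    rw [h4, hstar2]
  have hDelta2 : star y * X * y - X * y * star y
      = (star F * X - X * star F) + (star F * (X * F) - (X * F) * star F) := by
    have hsy : star y = 1 + star F := by rw [hyF, star_add, star_one]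
    rw [hsy, hyF]
    noncomm_ring
  have hDeq : Dl = (star F * X - X * star F) + (star F * (X * F) - (X * F) * star F) := by
    rw [← hDelta1, hDelta2]
  -- W membership of Delta
  have hWXF : Wp τ (X * F) := W_mul_left τ hadd hhomog htracial hWF X
  have hWD : Wp τ Dl := by
    rw [hDeq]
    exact W_add τ
      (W_sub τ (W_mul_right τ hadd hhomog htracial hWFs X)
        (W_mul_left τ hadd hhomog htracial hWFs X))
      (W_sub τ (W_mul_left τ hadd hhomog htracial hWXF (star F))
        (W_mul_right τ hadd hhomog htracial hWXF (star F)))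
  -- star qt in terms of Delta
  have hsqtD : star qt = star (↑g⁻¹ : Unitization ℂ A) * (Dl * star (↑g : Unitization ℂ A)) := by
    rw [hDl]
    calc star qt = (star (↑g⁻¹ : Unitization ℂ A) * star (↑g : Unitization ℂ A)) * star qt
          * (star (↑g⁻¹ : Unitization ℂ A) * star (↑g : Unitization ℂ A)) := by
          rw [hstar1, one_mul, mul_one]
      _ = star (↑g⁻¹ : Unitization ℂ A) * ((star (↑g : Unitization ℂ A) * star qt
          * star (↑g⁻¹ : Unitization ℂ A)) * star (↑g : Unitization ℂ A)) := by noncomm_ring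
  have hWsqt : Wp τ (star qt) := by
    rw [hsqtD]
    exact W_mul_left τ hadd hhomog htracial
      (W_mul_right τ hadd hhomog htracial hWD (star (↑g : Unitization ℂ A))) _
  -- sigU Dl = 0
  have hsigD : sigU τ Dl = 0 := by
    have e1 : sigU τ (star F * X) = sigU τ (X * star F) :=
      cycU τ hadd hhomog htracial hWFs X
    have e2 : sigU τ (star F * (X * F)) = sigU τ ((X * F) * star F) :=
      cycU τ hadd hhomog htracial hWFs (X * F)
    have s1 := sigU_sub τ hadd hhomog (W_mul_right τ hadd hhomog htracial hWFs X)
        (W_mul_left τ hadd hhomog htracial hWFs X)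
    have s2 := sigU_sub τ hadd hhomog (W_mul_left τ hadd hhomog htracial hWXF (star F))
        (W_mul_right τ hadd hhomog htracial hWXF (star F))
    have s0 := sigU_add τ hadd hhomog
        (W_sub τ (W_mul_right τ hadd hhomog htracial hWFs X)
          (W_mul_left τ hadd hhomog htracial hWFs X))
        (W_sub τ (W_mul_left τ hadd hhomog htracial hWXF (star F))
          (W_mul_right τ hadd hhomog htracial hWXF (star F)))
    rw [hDeq, s0, s1, s2, e1, e2]
    ring
  -- sigU (star qt) = 0
  have hsigsqt : sigU τ (star qt) = 0 := by
    have h5 : Dl * (star (↑g : Unitization ℂ A) * star (↑g⁻¹ : Unitization ℂ A)) = Dl := by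
      rw [hstar2, mul_one]
    calc sigU τ (star qt)
        = sigU τ (star (↑g⁻¹ : Unitization ℂ A) * (Dl * star (↑g : Unitization ℂ A))) := by
          rw [hsqtD]
      _ = sigU τ ((Dl * star (↑g : Unitization ℂ A)) * star (↑g⁻¹ : Unitization ℂ A)) :=
          (cycU τ hadd hhomog htracial
            (W_mul_right τ hadd hhomog htracial hWD (star (↑g : Unitization ℂ A)))
            (star (↑g⁻¹ : Unitization ℂ A))).symm
      _ = sigU τ (Dl * (star (↑g : Unitization ℂ A) * star (↑g⁻¹ : Unitization ℂ A))) := by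
          rw [mul_assoc]
      _ = sigU τ Dl := by rw [h5]
      _ = 0 := hsigD
  -- idempotency of qt
  have hq2 : qt * qt = qt := by
    have h6 : v * u * (v * u) = v * u := by
      have : v * u * (v * u) = v * (u * v) * u := by noncomm_ring
      rw [this, huv, mul_one]
    have h7 : qt * qt = 1 - v * u - v * u + v * u * (v * u) := by rw [hqt]; noncomm_ring
    rw [h7, h6, hqt]; abel
  have hsq2 : star qt * star qt = star qt := by rw [← star_mul, hq2]
  -- the unit Z
  set wA : A := star (b + a - b * a) - (b + a - b * a) with hwA
  set y₀ : A := star wA * wA with hy₀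
  have hy₀0 : 0 ≤ y₀ := star_mul_self_nonneg wA
  have hZu : IsUnit ((1 : Unitization ℂ A) + (y₀ : Unitization ℂ A)) := isUnit_one_add_inr y₀ hy₀0
  set Z : (Unitization ℂ A)ˣ := hZu.unit with hZ
  have hZval : (Z : Unitization ℂ A) = 1 + (y₀ : Unitization ℂ A) := rfl
  have hω : star qt - qt = ((wA : A) : Unitization ℂ A) := by
    rw [hwA, Unitization.inr_sub, Unitization.inr_star, ← hqA]
  have hZ2 : (Z : Unitization ℂ A)
      = 1 - star qt - qt + star qt * qt + qt * star qt := by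
    have h8 : ((y₀ : A) : Unitization ℂ A) = (qt - star qt) * (star qt - qt) := by
      rw [hy₀, Unitization.inr_mul, Unitization.inr_star, ← hω]
      rw [star_sub, star_star]
    have h9 : (qt - star qt) * (star qt - qt)
        = qt * star qt - qt * qt - star qt * star qt + star qt * qt := by noncomm_ring
    rw [hZval, h8, h9, hq2, hsq2]
    abel
  have hZq : (Z : Unitization ℂ A) * qt = qt * star qt * qt := by
    have h10 : (1 - star qt - qt + star qt * qt + qt * star qt) * qt
        = qt - star qt * qt - qt * qt + star qt * (qt * qt) + qt * (star qt * qt) := by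
      noncomm_ring
    rw [hZ2, h10, hq2]
    calc qt - star qt * qt - qt + star qt * qt + qt * (star qt * qt)
        = qt * (star qt * qt) := by abel
      _ = qt * star qt * qt := by rw [mul_assoc]
  have hqZ : qt * (Z : Unitization ℂ A) = qt * star qt * qt := by
    have h10 : qt * (1 - star qt - qt + star qt * qt + qt * star qt)
        = qt - qt * star qt - qt * qt + qt * (star qt * qt) + (qt * qt) * star qt := by
      noncomm_ring
    rw [hZ2, h10, hq2]
    calc qt - qt * star qt - qt + qt * (star qt * qt) + qt * star qt
        = qt * (star qt * qt) := by abel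
      _ = qt * star qt * qt := by rw [mul_assoc]
  have hcomm : (Z : Unitization ℂ A) * qt = qt * (Z : Unitization ℂ A) := by rw [hZq, hqZ]
  have hZsa : star (Z : Unitization ℂ A) = (Z : Unitization ℂ A) := by
    rw [hZval, star_add, star_one, ← Unitization.inr_star]
    congr 2
    rw [hy₀, star_mul, star_star]
  have hcommstar : (Z : Unitization ℂ A) * star qt = star qt * (Z : Unitization ℂ A) := by
    have := congrArg star hcomm
    rw [star_mul, star_mul, hZsa] at this
    exact this.symm
  -- commutation with the inverse
  have hcomminv : ∀ w : Unitization ℂ A, (Z : Unitization ℂ A) * w = w * (Z : Unitization ℂ A) →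
      (↑Z⁻¹ : Unitization ℂ A) * w = w * (↑Z⁻¹ : Unitization ℂ A) := by
    intro w h
    calc (↑Z⁻¹ : Unitization ℂ A) * w
        = (↑Z⁻¹ : Unitization ℂ A) * w * ((Z : Unitization ℂ A) * ↑Z⁻¹) := by
          rw [Units.mul_inv, mul_one]
      _ = (↑Z⁻¹ : Unitization ℂ A) * (w * (Z : Unitization ℂ A)) * ↑Z⁻¹ := by noncomm_ring
      _ = (↑Z⁻¹ : Unitization ℂ A) * ((Z : Unitization ℂ A) * w) * ↑Z⁻¹ := by rw [h]
      _ = ((↑Z⁻¹ : Unitization ℂ A) * (Z : Unitization ℂ A)) * (w * ↑Z⁻¹) := by noncomm_ring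
      _ = w * ↑Z⁻¹ := by rw [Units.inv_mul, one_mul]
  have hinvq : (↑Z⁻¹ : Unitization ℂ A) * qt = qt * ↑Z⁻¹ := hcomminv qt hcomm
  have hinvsq : (↑Z⁻¹ : Unitization ℂ A) * star qt = star qt * ↑Z⁻¹ := hcomminv _ hcommstar
  have hZinvsa : star (↑Z⁻¹ : Unitization ℂ A) = ↑Z⁻¹ := by
    calc star (↑Z⁻¹ : Unitization ℂ A)
        = star (↑Z⁻¹ : Unitization ℂ A) * ((Z : Unitization ℂ A) * ↑Z⁻¹) := by
          rw [Units.mul_inv, mul_one]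
      _ = (star (↑Z⁻¹ : Unitization ℂ A) * (Z : Unitization ℂ A)) * ↑Z⁻¹ := by rw [mul_assoc]
      _ = (star (↑Z⁻¹ : Unitization ℂ A) * star (Z : Unitization ℂ A)) * ↑Z⁻¹ := by rw [hZsa]
      _ = star ((Z : Unitization ℂ A) * ↑Z⁻¹) * ↑Z⁻¹ := by rw [star_mul]
      _ = ↑Z⁻¹ := by rw [Units.mul_inv, star_one, one_mul]
  -- the projection p
  set p : Unitization ℂ A := qt * star qt * (↑Z⁻¹ : Unitization ℂ A) with hp
  have hqsqZ : (↑Z⁻¹ : Unitization ℂ A) * (qt * star qt) = qt * star qt * ↑Z⁻¹ := by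
    calc (↑Z⁻¹ : Unitization ℂ A) * (qt * star qt)
        = ((↑Z⁻¹ : Unitization ℂ A) * qt) * star qt := by rw [mul_assoc]
      _ = (qt * (↑Z⁻¹ : Unitization ℂ A)) * star qt := by rw [hinvq]
      _ = qt * ((↑Z⁻¹ : Unitization ℂ A) * star qt) := by rw [mul_assoc]
      _ = qt * (star qt * (↑Z⁻¹ : Unitization ℂ A)) := by rw [hinvsq]
      _ = qt * star qt * ↑Z⁻¹ := by rw [mul_assoc]
  have hpsa : star p = p := by
    calc star p = star (↑Z⁻¹ : Unitization ℂ A) * star (qt * star qt) := by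
          rw [hp, star_mul]
      _ = (↑Z⁻¹ : Unitization ℂ A) * (qt * star qt) := by
          rw [hZinvsa, star_mul, star_star]
      _ = qt * star qt * ↑Z⁻¹ := hqsqZ
      _ = p := hp.symm
  have hqtp : qt * p = p := by
    calc qt * p = (qt * qt) * star qt * (↑Z⁻¹ : Unitization ℂ A) := by rw [hp]; noncomm_ring
      _ = p := by rw [hq2, hp]
  have hpq : p * qt = qt := by
    calc p * qt = qt * star qt * ((↑Z⁻¹ : Unitization ℂ A) * qt) := by rw [hp]; noncomm_ring
      _ = qt * star qt * (qt * (↑Z⁻¹ : Unitization ℂ A)) := by rw [hinvq]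
      _ = (qt * star qt * qt) * (↑Z⁻¹ : Unitization ℂ A) := by noncomm_ring
      _ = (qt * (Z : Unitization ℂ A)) * (↑Z⁻¹ : Unitization ℂ A) := by rw [← hqZ]
      _ = qt * ((Z : Unitization ℂ A) * (↑Z⁻¹ : Unitization ℂ A)) := by rw [mul_assoc]
      _ = qt := by rw [Units.mul_inv, mul_one]
  have hp2 : p * p = p := by
    calc p * p = qt * star qt * ((↑Z⁻¹ : Unitization ℂ A) * (qt * star qt)) * ↑Z⁻¹ := by
          rw [hp]; noncomm_ring
      _ = qt * star qt * (qt * star qt * (↑Z⁻¹ : Unitization ℂ A)) * ↑Z⁻¹ := by rw [hqsqZ]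
      _ = (qt * star qt * qt) * (star qt * (↑Z⁻¹ : Unitization ℂ A) * ↑Z⁻¹) := by noncomm_ring
      _ = ((Z : Unitization ℂ A) * qt) * (star qt * (↑Z⁻¹ : Unitization ℂ A) * ↑Z⁻¹) := by
          rw [← hZq]
      _ = (Z : Unitization ℂ A) * (qt * star qt * (↑Z⁻¹ : Unitization ℂ A)) * ↑Z⁻¹ := by
          noncomm_ring
      _ = (Z : Unitization ℂ A) * ((↑Z⁻¹ : Unitization ℂ A) * (qt * star qt)) * ↑Z⁻¹ := by
          rw [hqsqZ]
      _ = ((Z : Unitization ℂ A) * (↑Z⁻¹ : Unitization ℂ A)) * (qt * star qt * ↑Z⁻¹) := by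
          noncomm_ring
      _ = p := by rw [Units.mul_inv, one_mul, hp]
  have hpsq : p * star qt = p := by
    have := congrArg star hqtp
    rw [star_mul, hpsa] at this
    exact this
  have hsqp : star qt * p = star qt := by
    have := congrArg star hpq
    rw [star_mul, hpsa] at this
    exact this
  -- p has its A-part in the span
  have hWp : Wp τ p := by
    have h11 : p = qt * (star qt * (↑Z⁻¹ : Unitization ℂ A)) := by rw [hp, mul_assoc]
    rw [h11]
    exact W_mul_left τ hadd hhomog htracial
      (W_mul_right τ hadd hhomog htracial hWsqt _) qt
  set P : A := p.snd with hPdef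
  have hpinr : p = ((P : A) : Unitization ℂ A) := W_eq_inr τ hWp
  have hP0 : 0 ≤ P := by
    have h12 : p = star p * p := by rw [hpsa, hp2]
    rw [hpinr, ← Unitization.inr_star, ← Unitization.inr_mul] at h12
    have h13 : P = star P * P := Unitization.inr_injective h12
    rw [h13]; exact star_mul_self_nonneg P
  have hPV : P ∈ Vsp τ := hWp.2
  have hPfin : τ P < ⊤ := tau_lt_top_of_mem τ hadd hhomog hPV hP0
  -- sig of p vanishes
  have hsigp : sigU τ p = 0 := by
    calc sigU τ p = sigU τ (p * star qt) := by rw [hpsq]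
      _ = sigU τ (star qt * p) := (cycU τ hadd hhomog htracial hWsqt p).symm
      _ = sigU τ (star qt) := by rw [hsqp]
      _ = 0 := hsigsqt
  -- conclude τ P = 0
  have hsigP : sig τ P = ((τ P).toReal : ℂ) := sig_S τ hadd hhomog ⟨hP0, hPfin⟩
  have htoReal : ((τ P).toReal : ℂ) = 0 := by
    rw [← hsigP]
    exact hsigp
  have hτP : τ P = 0 := by
    have h14 : (τ P).toReal = 0 := by exact_mod_cast htoReal
    rcases ENNReal.toReal_eq_zero_iff _ |>.mp h14 with h | h
    · exact h
    · exact absurd h hPfin.ne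
  have hPzero : P = 0 := hfaithful P hP0 hτP
  have hpzero : p = 0 := by rw [hpinr, hPzero, Unitization.inr_zero]
  have hqtzero : qt = 0 := by rw [← hpq, hpzero, zero_mul]
  have : ((b + a - b * a : A) : Unitization ℂ A) = ((0 : A) : Unitization ℂ A) := by
    rw [← hqA, hqtzero, Unitization.inr_zero]
  exact Unitization.inr_injective this


end DF8

/-- Let `A` be a C*-algebra and `τ` a faithful tracial weight on the
positive cone `A₊` (with values in `[0,∞]`).  Let `B` be the norm closure of the linear
span of `{x ∈ A₊ : τ(x) < ∞}`.  Then `B` is directly finite. -/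
theorem directlyFinite_of_faithful_tracial_weight
    {A : Type*} [NonUnitalNormedRing A] [StarRing A] [CStarRing A]
    [NormedSpace ℂ A] [IsScalarTower ℂ A A] [SMulCommClass ℂ A A] [StarModule ℂ A]
    [CompleteSpace A] [PartialOrder A] [StarOrderedRing A]
    (τ : A → ℝ≥0∞)
    (hadd : ∀ x y : A, 0 ≤ x → 0 ≤ y → τ (x + y) = τ x + τ y)
    (hhomog : ∀ (t : ℝ) (x : A), 0 ≤ t → 0 ≤ x → τ (t • x) = ENNReal.ofReal t * τ x)
    (hfaithful : ∀ x : A, 0 ≤ x → τ x = 0 → x = 0)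
    (htracial : ∀ x : A, τ (star x * x) = τ (x * star x)) :
    ∀ a b : A,
      a ∈ closure (Submodule.span ℂ {x : A | 0 ≤ x ∧ τ x < ⊤} : Set A) →
      b ∈ closure (Submodule.span ℂ {x : A | 0 ≤ x ∧ τ x < ⊤} : Set A) →
      a + b - a * b = 0 → b + a - b * a = 0 :=
  DF8.main τ hadd hhomog hfaithful htracial
end

section
/- Let A be a unital C*-algebra and let p ∈ A be an idempotent (p² = p). Then the element 1 + (p − p*)(p* − p) is invertible in A, and e := p p* (1 + (p − p*)(p* − p))⁻¹ is a hermitian idempotent (e* = e, e² = e) satisfying ep = p and pe = e. -/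
/-- In a unital C*-algebra, for an idempotent `p` the element
`1 + (p - p*)(p* - p)` is invertible, and `e := p p* (1 + (p - p*)(p* - p))⁻¹` is a
hermitian idempotent with `e p = p` and `p e = e`. -/
theorem hermitian_idempotent_formula
    {A : Type*} [NormedRing A] [StarRing A] [CStarRing A]
    [NormedAlgebra ℂ A] [StarModule ℂ A] [CompleteSpace A]
    (p : A) (hp : p * p = p) :
    IsUnit (1 + (p - star p) * (star p - p)) ∧
    ∀ e : A, e = p * star p * Ring.inverse (1 + (p - star p) * (star p - p)) →
      star e = e ∧ e * e = e ∧ e * p = p ∧ p * e = e := by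
  set q : A := star p with hqdef
  have hq : q * q = q := by rw [hqdef, ← star_mul, hp]
  set a : A := 1 + (p - q) * (q - p) with hadef
  -- invertibility
  have hunit : IsUnit a := by
    letI : CStarAlgebra A := {}
    letI := CStarAlgebra.spectralOrder A
    haveI := CStarAlgebra.spectralOrderedRing A
    have hqp : (q - p) = star (p - q) := by simp [hqdef]
    rw [hadef, hqp]
    exact CStarAlgebra.isUnit_of_le 1
      (le_add_of_nonneg_right (mul_star_self_nonneg _))
  have ha : a = 1 + p * q + q * p - p - q := by
    have h1 : (p - q) * (q - p) = p * q - p * p - q * q + q * p := by noncomm_ring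
    rw [hadef, h1, hp, hq]; abel
  have hap : a * p = p * q * p := by
    rw [ha]
    have : (1 + p * q + q * p - p - q) * p
        = p + p * q * p + q * (p * p) - p * p - q * p := by noncomm_ring
    rw [this, hp]; abel
  have hpa : p * a = p * q * p := by
    rw [ha]
    have : p * (1 + p * q + q * p - p - q)
        = p + (p * p) * q + p * q * p - p * p - p * q := by noncomm_ring
    rw [this, hp]; abel
  have haq : a * q = q * p * q := by
    rw [ha]
    have : (1 + p * q + q * p - p - q) * q
        = q + p * (q * q) + q * p * q - p * q - q * q := by noncomm_ring
    rw [this, hq]; abel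
  have hqa : q * a = q * p * q := by
    rw [ha]
    have : q * (1 + p * q + q * p - p - q)
        = q + q * p * q + (q * q) * p - q * p - q * q := by noncomm_ring
    rw [this, hq]; abel
  have hsa : star a = a := by
    rw [ha]; simp only [star_sub, star_add, star_one, star_mul, ← hqdef]
    rw [hqdef, star_star]; abel
  obtain ⟨u, hu⟩ := hunit
  refine ⟨⟨u, hu⟩, ?_⟩
  set v : A := ↑u⁻¹ with hvdef
  have huv : a * v = 1 := by rw [hvdef, ← hu]; exact u.mul_inv
  have hvu : v * a = 1 := by rw [hvdef, ← hu]; exact u.inv_mul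
  have hinv : Ring.inverse a = v := by rw [← hu, Ring.inverse_unit, hvdef]
  have hvp : v * p = p * v := by
    calc v * p = v * p * (a * v) := by rw [huv, mul_one]
    _ = v * (p * a) * v := by noncomm_ring
    _ = v * (a * p) * v := by rw [hpa, hap]
    _ = (v * a) * (p * v) := by noncomm_ring
    _ = p * v := by rw [hvu, one_mul]
  have hvq : v * q = q * v := by
    calc v * q = v * q * (a * v) := by rw [huv, mul_one]
    _ = v * (q * a) * v := by noncomm_ring
    _ = v * (a * q) * v := by rw [hqa, haq]
    _ = (v * a) * (q * v) := by noncomm_ring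
    _ = q * v := by rw [hvu, one_mul]
  have hsv : star v = v := by
    have h1 : star v * a = 1 := by
      rw [← hsa, ← star_mul, huv, star_one]
    calc star v = star v * (a * v) := by rw [huv, mul_one]
    _ = (star v * a) * v := by rw [mul_assoc]
    _ = v := by rw [h1, one_mul]
  intro e he
  rw [hinv] at he
  constructor
  · rw [he]
    simp only [star_mul, hsv, ← hqdef]
    rw [hqdef, star_star]
    calc v * (p * q) = v * p * q := by rw [mul_assoc]
    _ = p * (v * q) := by rw [hvp, mul_assoc]
    _ = p * q * v := by rw [hvq, mul_assoc]
  have hep : e * p = p := by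
    rw [he]
    calc p * q * v * p = p * q * (v * p) := by rw [mul_assoc]
    _ = p * q * p * v := by rw [hvp, ← mul_assoc]
    _ = p * a * v := by rw [← hpa]
    _ = p * (a * v) := by rw [mul_assoc]
    _ = p := by rw [huv, mul_one]
  refine ⟨?_, hep, ?_⟩
  · calc e * e = e * (p * q * v) := by rw [← he]
    _ = (e * p) * (q * v) := by noncomm_ring
    _ = p * (q * v) := by rw [hep]
    _ = e := by rw [he, mul_assoc]
  · calc p * e = p * (p * q * v) := by rw [he]
    _ = (p * p) * (q * v) := by noncomm_ring
    _ = p * (q * v) := by rw [hp]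
    _ = e := by rw [he, mul_assoc]
end

section
/- Let G be a locally compact group with left Haar measure μ and 1 < p < ∞. If S ∈ PF_p(G) and (g, T) ∈ X_p(G), then (S(g), S∘T) ∈ X_p(G). Consequently the bilinear map ((f,S),(g,T)) ↦ (S(g), S∘T) makes X_p(G) a Banach algebra, and the coordinate projection π_P : X_p(G) → PF_p(G), (g,T) ↦ T, is an algebra homomorphism with dense range. -/
open MeasureTheory ENNReal
open scoped ENNReal Pointwise

/-- Convolution of two (complex-valued) functions on a locally compact group. -/
noncomputable def conv {G : Type*} [Group G] [MeasurableSpace G] (μ : Measure G)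
    (f h : G → ℂ) : G → ℂ :=
  fun x => ∫ y, f y * h (y⁻¹ * x) ∂μ

/-- `T` is the convolution operator `λ_p(f)` on `L^p(G,μ)`. -/
def IsConvOp {G : Type*} [Group G] [TopologicalSpace G] [MeasurableSpace G]
    (μ : Measure G) (p : ℝ≥0∞) [Fact (1 ≤ p)]
    (f : G → ℂ) (T : Lp ℂ p μ →L[ℂ] Lp ℂ p μ) : Prop :=
  ∀ (h : G → ℂ), Continuous h → HasCompactSupport h → ∀ (hm : MemLp h p μ),
    ⇑(T (hm.toLp h)) =ᵐ[μ] conv μ f h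

/-- The algebra of `p`-pseudofunctions `PF_p(G)`. -/
def PF {G : Type*} [Group G] [TopologicalSpace G] [MeasurableSpace G]
    (μ : Measure G) (p : ℝ≥0∞) [Fact (1 ≤ p)] :
    Set (Lp ℂ p μ →L[ℂ] Lp ℂ p μ) :=
  closure {T | ∃ f : G → ℂ, Continuous f ∧ HasCompactSupport f ∧ IsConvOp μ p f T}

/-- `X_p(G)`: the norm closure, in `L^p(G,μ) ⊕ B(L^p(G,μ))`, of the set of pairs
`(f, λ_p(f))` for `f ∈ C_c(G)`. -/
def Xp {G : Type*} [Group G] [TopologicalSpace G] [MeasurableSpace G]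
    (μ : Measure G) (p : ℝ≥0∞) [Fact (1 ≤ p)] :
    Set (Lp ℂ p μ × (Lp ℂ p μ →L[ℂ] Lp ℂ p μ)) :=
  closure {x | ∃ f : G → ℂ, Continuous f ∧ HasCompactSupport f ∧
    ⇑x.1 =ᵐ[μ] f ∧ IsConvOp μ p f x.2}

section Helpers

variable {G : Type*} [Group G] [TopologicalSpace G] [IsTopologicalGroup G]
  [LocallyCompactSpace G] [MeasurableSpace G] [BorelSpace G]

/-- A continuous compactly supported function is bounded in norm. -/
lemma exists_norm_bound {g : G → ℂ} (hg : Continuous g) (hgc : HasCompactSupport g) :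
    ∃ C : ℝ, 0 ≤ C ∧ ∀ x, ‖g x‖ ≤ C := by
  obtain ⟨C, hC⟩ := hg.bounded_above_of_compact_support hgc
  exact ⟨max C 0, le_max_right _ _, fun x => (hC x).trans (le_max_left _ _)⟩

lemma conv_support_subset (μ : Measure G) (f g : G → ℂ) :
    Function.support (conv μ f g) ⊆ tsupport f * tsupport g := by
  intro x hx
  by_contra hmem
  apply hx
  have hzero : ∀ y, f y * g (y⁻¹ * x) = 0 := by
    intro y
    rcases eq_or_ne (f y) 0 with h | h
    · simp [h]
    rcases eq_or_ne (g (y⁻¹ * x)) 0 with h2 | h2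
    · simp [h2]
    have : y * (y⁻¹ * x) ∈ tsupport f * tsupport g :=
      Set.mul_mem_mul (subset_tsupport f h) (subset_tsupport g h2)
    rw [mul_inv_cancel_left] at this
    exact absurd this hmem
  show (∫ y, f y * g (y⁻¹ * x) ∂μ) = 0
  simp [hzero]

lemma conv_hasCompactSupport (μ : Measure G) {f g : G → ℂ}
    (hf : HasCompactSupport f) (hg : HasCompactSupport g) :
    HasCompactSupport (conv μ f g) := by
  have hcf : IsCompact (tsupport f) := hf
  have hcg : IsCompact (tsupport g) := hg
  exact IsCompact.of_isClosed_subset (hcf.mul hcg).closure isClosed_closure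
    (closure_mono (conv_support_subset μ f g))

variable (μ : Measure G) [μ.IsHaarMeasure]

lemma conv_continuous {f g : G → ℂ} (hf : Continuous f) (hfc : HasCompactSupport f)
    (hg : Continuous g) (hgc : HasCompactSupport g) : Continuous (conv μ f g) := by
  apply continuous_iff_continuousAt.2 (fun x₀ => ?_)
  obtain ⟨t, t_comp, ht⟩ : ∃ t, IsCompact t ∧ t ∈ nhds x₀ := exists_compact_mem_nhds x₀
  have A : ContinuousOn (fun x => ∫ y, f y * g (y⁻¹ * x) ∂μ) t := by
    apply continuousOn_integral_of_compact_support (hfc : IsCompact (tsupport f))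
    · have : Continuous (Function.uncurry fun (x y : G) => f y * g (y⁻¹ * x)) := by
        rw [Function.uncurry_def]
        exact (hf.comp continuous_snd).mul
          (hg.comp ((continuous_snd.inv).mul continuous_fst))
      exact this.continuousOn
    · intro p x _ hx
      rw [image_eq_zero_of_notMem_tsupport hx, zero_mul]
  exact A.continuousAt ht

lemma conv_assoc {f g h : G → ℂ} (hf : Continuous f) (hfc : HasCompactSupport f)
    (hg : Continuous g) (hgc : HasCompactSupport g)
    (hh : Continuous h) (hhc : HasCompactSupport h) :
    conv μ (conv μ f g) h = conv μ f (conv μ g h) := by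
  funext x
  have hcf : IsCompact (tsupport f) := hfc
  have hcg : IsCompact (tsupport g) := hgc
  set F : G → G → ℂ := fun y z => f z * g (z⁻¹ * y) * h (y⁻¹ * x) with hFdef
  have hFcont : Continuous (Function.uncurry F) := by
    rw [Function.uncurry_def]
    exact ((hf.comp continuous_snd).mul
        (hg.comp ((continuous_snd.inv).mul continuous_fst))).mul
        (hh.comp ((continuous_fst.inv).mul continuous_const))
  have hFsupp : Function.support (Function.uncurry F) ⊆
      (tsupport f * tsupport g) ×ˢ tsupport f := by
    rintro ⟨y, z⟩ hq
    have h1 : f z ≠ 0 := fun h0 => hq (by simp [Function.uncurry, hFdef, h0])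
    have h2 : g (z⁻¹ * y) ≠ 0 := fun h0 => hq (by simp [Function.uncurry, hFdef, h0])
    have : z * (z⁻¹ * y) ∈ tsupport f * tsupport g :=
      Set.mul_mem_mul (subset_tsupport f h1) (subset_tsupport g h2)
    rw [mul_inv_cancel_left] at this
    exact ⟨this, subset_tsupport f h1⟩
  have hFc : HasCompactSupport (Function.uncurry F) :=
    IsCompact.of_isClosed_subset (((hcf.mul hcg).prod hcf).closure) isClosed_closure
      (closure_mono hFsupp)
  have swap := integral_integral_swap_of_hasCompactSupport hFcont hFc
    (μ := μ) (ν := μ)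
  have stepE : ∀ z, (∫ y, f z * g (z⁻¹ * y) * h (y⁻¹ * x) ∂μ)
      = f z * conv μ g h (z⁻¹ * x) := by
    intro z
    have hinv := integral_mul_left_eq_self (μ := μ)
      (fun y => g (z⁻¹ * y) * h (y⁻¹ * x)) z
    simp only [inv_mul_cancel_left, mul_inv_rev, mul_assoc] at hinv
    calc (∫ y, f z * g (z⁻¹ * y) * h (y⁻¹ * x) ∂μ)
        = ∫ y, f z * (g (z⁻¹ * y) * h (y⁻¹ * x)) ∂μ := by simp only [mul_assoc]
      _ = f z * ∫ y, g (z⁻¹ * y) * h (y⁻¹ * x) ∂μ := integral_const_mul _ _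
      _ = f z * ∫ y, g y * h (y⁻¹ * (z⁻¹ * x)) ∂μ := by rw [← hinv]
      _ = f z * conv μ g h (z⁻¹ * x) := rfl
  show (∫ y, conv μ f g y * h (y⁻¹ * x) ∂μ) = ∫ z, f z * conv μ g h (z⁻¹ * x) ∂μ
  calc (∫ y, conv μ f g y * h (y⁻¹ * x) ∂μ)
      = ∫ y, ∫ z, f z * g (z⁻¹ * y) * h (y⁻¹ * x) ∂μ ∂μ := by
        congr 1 with y
        rw [show conv μ f g y = ∫ z, f z * g (z⁻¹ * y) ∂μ from rfl,
          ← integral_mul_const]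
    _ = ∫ z, ∫ y, f z * g (z⁻¹ * y) * h (y⁻¹ * x) ∂μ ∂μ := swap
    _ = ∫ z, f z * conv μ g h (z⁻¹ * x) ∂μ := by
        congr 1 with z
        exact stepE z

lemma isConvOp_mul {p : ℝ≥0∞} [Fact (1 ≤ p)] {f g : G → ℂ}
    {S T : Lp ℂ p μ →L[ℂ] Lp ℂ p μ}
    (hf : Continuous f) (hfc : HasCompactSupport f)
    (hg : Continuous g) (hgc : HasCompactSupport g)
    (hS : IsConvOp μ p f S) (hT : IsConvOp μ p g T) :
    IsConvOp μ p (conv μ f g) (S * T) := by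
  intro h hh hhc hm
  have hk : Continuous (conv μ g h) := conv_continuous μ hg hgc hh hhc
  have hkc : HasCompactSupport (conv μ g h) := conv_hasCompactSupport μ hgc hhc
  have hkm : MemLp (conv μ g h) p μ := hk.memLp_of_hasCompactSupport hkc
  have h1 : T (hm.toLp h) = hkm.toLp (conv μ g h) :=
    Lp.ext ((hT h hh hhc hm).trans (hkm.coeFn_toLp).symm)
  have h2 : ⇑(S (hkm.toLp (conv μ g h))) =ᵐ[μ] conv μ f (conv μ g h) :=
    hS _ hk hkc hkm
  have h3 : (S * T) (hm.toLp h) = S (hkm.toLp (conv μ g h)) := by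
    rw [ContinuousLinearMap.mul_apply, h1]
  rw [h3, conv_assoc μ hf hfc hg hgc hh hhc]
  exact h2

end Helpers

/-- `X_p(G)` is a left ideal-like Banach algebra over `PF_p(G)`:
if `S ∈ PF_p(G)` and `(g,T) ∈ X_p(G)`, then `(S(g), S∘T) ∈ X_p(G)`; the multiplication
`((f,S),(g,T)) ↦ (S(g), S∘T)` makes `X_p(G)` a Banach algebra (it is internal,
associative and submultiplicative), and the coordinate projection `π_P` onto
`PF_p(G)` is an algebra homomorphism with dense range. -/
theorem Xp_banach_algebra
    {G : Type*} [Group G] [TopologicalSpace G] [IsTopologicalGroup G]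
    [LocallyCompactSpace G] [MeasurableSpace G] [BorelSpace G]
    (μ : Measure G) [μ.IsHaarMeasure]
    (p : ℝ≥0∞) [Fact (1 ≤ p)] (hp1 : 1 < p) (hp2 : p ≠ ⊤) :
    (∀ S ∈ PF μ p, ∀ x ∈ Xp μ p, (S x.1, S * x.2) ∈ Xp μ p) ∧
    (∀ x ∈ Xp μ p, ∀ y ∈ Xp μ p, (x.2 y.1, x.2 * y.2) ∈ Xp μ p) ∧
    (∀ x ∈ Xp μ p, ∀ y ∈ Xp μ p, ∀ z ∈ Xp μ p,
      ((x.2 * y.2) z.1, (x.2 * y.2) * z.2) = (x.2 ((y.2 z.1, y.2 * z.2).1),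
        x.2 * (y.2 * z.2))) ∧
    (∀ x ∈ Xp μ p, ∀ y ∈ Xp μ p,
      ‖(x.2 y.1, x.2 * y.2)‖ ≤ ‖x‖ * ‖y‖) ∧
    (∀ x ∈ Xp μ p, x.2 ∈ PF μ p) ∧
    (∀ S ∈ PF μ p, S ∈ closure (Prod.snd '' Xp μ p)) := by
  classical
  -- the generating sets
  let D : Set (Lp ℂ p μ × (Lp ℂ p μ →L[ℂ] Lp ℂ p μ)) :=
    {x | ∃ f : G → ℂ, Continuous f ∧ HasCompactSupport f ∧
      ⇑x.1 =ᵐ[μ] f ∧ IsConvOp μ p f x.2}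
  let D2 : Set (Lp ℂ p μ →L[ℂ] Lp ℂ p μ) :=
    {T | ∃ f : G → ℂ, Continuous f ∧ HasCompactSupport f ∧ IsConvOp μ p f T}
  have gen : ∀ S ∈ D2, ∀ x ∈ D, (S x.1, S * x.2) ∈ D := by
    rintro S ⟨f, hf, hfc, hS⟩ x ⟨g, hg, hgc, hx1, hT⟩
    have hgm : MemLp g p μ := hg.memLp_of_hasCompactSupport hgc
    have hx1' : x.1 = hgm.toLp g := Lp.ext (hx1.trans hgm.coeFn_toLp.symm)
    refine ⟨conv μ f g, conv_continuous μ hf hfc hg hgc,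
      conv_hasCompactSupport μ hfc hgc, ?_, isConvOp_mul μ hf hfc hg hgc hS hT⟩
    show ⇑(S x.1) =ᵐ[μ] conv μ f g
    rw [hx1']
    exact hS g hg hgc hgm
  have contΦ : Continuous (fun q :
      (Lp ℂ p μ →L[ℂ] Lp ℂ p μ) × (Lp ℂ p μ × (Lp ℂ p μ →L[ℂ] Lp ℂ p μ)) =>
      ((q.1 q.2.1 : Lp ℂ p μ), q.1 * q.2.2)) := by
    apply Continuous.prodMk
    · exact isBoundedBilinearMap_apply.continuous.comp
        (continuous_fst.prodMk (continuous_fst.comp continuous_snd))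
    · exact continuous_mul.comp
        (continuous_fst.prodMk (continuous_snd.comp continuous_snd))
  have item1 : ∀ S ∈ PF μ p, ∀ x ∈ Xp μ p, (S x.1, S * x.2) ∈ Xp μ p := by
    intro S hS x hx
    have hmem : (S, x) ∈ closure (D2 ×ˢ D) := by
      rw [closure_prod_eq]
      exact ⟨hS, hx⟩
    have key := map_mem_closure (s := D2 ×ˢ D) (t := D) contΦ hmem
      (fun q hq => gen q.1 hq.1 q.2 hq.2)
    exact key
  have item5 : ∀ x ∈ Xp μ p, x.2 ∈ PF μ p := by
    intro x hx
    refine map_mem_closure (s := D) (t := D2) continuous_snd hx (fun q hq => ?_)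
    obtain ⟨f, h1, h2, _, h4⟩ := hq
    exact ⟨f, h1, h2, h4⟩
  refine ⟨item1, fun x hx y hy => item1 x.2 (item5 x hx) y hy, ?_, ?_, item5, ?_⟩
  · intro x _ y _ z _
    exact Prod.ext rfl (mul_assoc _ _ _)
  · intro x _ y _
    rw [Prod.norm_def]
    refine max_le ?_ ?_
    · exact (x.2.le_opNorm y.1).trans
        (mul_le_mul (norm_snd_le x) (norm_fst_le y) (norm_nonneg _) (norm_nonneg _))
    · exact (norm_mul_le _ _).trans
        (mul_le_mul (norm_snd_le x) (norm_snd_le y) (norm_nonneg _) (norm_nonneg _))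
  · intro S hS
    refine closure_mono ?_ hS
    rintro T ⟨f, hf, hfc, hop⟩
    have hfm : MemLp f p μ := hf.memLp_of_hasCompactSupport hfc
    exact ⟨(hfm.toLp f, T),
      subset_closure ⟨f, hf, hfc, hfm.coeFn_toLp, hop⟩, rfl⟩
end
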